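/- (Exponentially fast OSRB.) Let (M₁, …, M_t, C) be random variables on the finite set ∏_{i=1}^t ℳᵢ × 𝒞 with joint pmf p, and let (M₁([n]), …, M_t([n]), C([n])) denote n i.i.d. copies. Fix rates R₁, …, R_t > 0 and let 𝔅ᵢ : ℳᵢⁿ → [⌈2^{nRᵢ}⌉], i ∈ [t], be mutually independent uniformly random functions. Let M̄ᵢ = 𝔅ᵢ(Mᵢ([n])) and let P denote the joint pmf of (C([n]), M̄₁, …, M̄_t) induced by a fixed realization of the binnings. If for every nonempty subset S ⊆ [t] it holds that ∑_{i∈S} Rᵢ < H(M_S | C), then there exists a constant κ > 0 and an integer N such that for all n ≥ N: 𝔼_𝔅 ‖ P_{C([n]), M̄₁,…,M̄_t} − p_{C([n])} ⊗ ∏_{i=1}^t p^U_{[⌈2^{nRᵢ}⌉]} ‖₁ ≤ 2^{−κn}, where the expectation 𝔼_𝔅 is over the random choice of the binning functions and p^U_S denotes the uniform pmf on S. -/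

import Mathlib

open Finset

noncomputable section

namespace OSRB

variable {t : ℕ} {M : Fin t → Type} [∀ i, Fintype (M i)] [∀ i, DecidableEq (M i)]
  {C : Type} [Fintype C] [DecidableEq C]

/-- Marginal pmf of `C`. -/
def pC (p : ((∀ i, M i) × C) → ℝ) (c : C) : ℝ := ∑ m : ∀ i, M i, p (m, c)

/-- Joint pmf of `(M_S, C)` for a subset `S` of the messages. -/
def pSC (p : ((∀ i, M i) × C) → ℝ) (S : Finset (Fin t))
    (f : ∀ i : S, M i.1) (c : C) : ℝ :=
  ∑ m : ∀ i, M i, if ∀ i : S, m i.1 = f i then p (m, c) else 0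

/-- Conditional entropy `H(M_S | C)` in bits (terms with zero probability vanish,
since `Real.logb 2 0 = 0`). -/
def condEnt (p : ((∀ i, M i) × C) → ℝ) (S : Finset (Fin t)) : ℝ :=
  - ∑ f : ∀ i : S, M i.1, ∑ c : C,
      pSC p S f c * Real.logb 2 (pSC p S f c / pC p c)

/-- The number of bins `⌈2^{nRᵢ}⌉` for source `i` at blocklength `n`. -/
def nbins (R : Fin t → ℝ) (n : ℕ) (i : Fin t) : ℕ := ⌈(2 : ℝ) ^ ((n : ℝ) * R i)⌉₊

/-- The pmf of `(C([n]), M̄₁, …, M̄_t)` induced by a fixed realization `𝔟` of the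
binning functions, where `M̄ᵢ = 𝔟ᵢ(Mᵢ([n]))` and the underlying source is `n` i.i.d.
copies of `(M₁, …, M_t, C) ∼ p`. -/
def Pind (p : ((∀ i, M i) × C) → ℝ) (R : Fin t → ℝ) (n : ℕ)
    (𝔟 : ∀ i, (Fin n → M i) → Fin (nbins R n i))
    (c : Fin n → C) (mb : ∀ i, Fin (nbins R n i)) : ℝ :=
  ∑ ω : Fin n → ((∀ i, M i) × C),
    if (∀ j, (ω j).2 = c j) ∧ (∀ i, 𝔟 i (fun j => (ω j).1 i) = mb i)
    then ∏ j, p (ω j) else 0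

/-- The ideal pmf `p_{C([n])} ⊗ ∏ᵢ p^U_{[⌈2^{nRᵢ}⌉]}`. -/
def Qideal (p : ((∀ i, M i) × C) → ℝ) (R : Fin t → ℝ) (n : ℕ)
    (c : Fin n → C) (_mb : ∀ i, Fin (nbins R n i)) : ℝ :=
  (∏ j, pC p (c j)) * ∏ i, ((nbins R n i : ℝ))⁻¹

/-- The expected total variation distance
`𝔼_𝔅 ‖P_{C([n]),M̄} − p_{C([n])} ⊗ ∏ᵢ p^U‖₁`, where the expectation is the average
over all (uniformly random, mutually independent) binning functions. -/
def Ebin (p : ((∀ i, M i) × C) → ℝ) (R : Fin t → ℝ) (n : ℕ) : ℝ :=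
  (Fintype.card (∀ i, (Fin n → M i) → Fin (nbins R n i)) : ℝ)⁻¹ *
    ∑ 𝔟 : ∀ i, (Fin n → M i) → Fin (nbins R n i),
      2⁻¹ * ∑ c : Fin n → C, ∑ mb : ∀ i, Fin (nbins R n i),
        |Pind p R n 𝔟 c mb - Qideal p R n c mb|



/-- Sum over a finite pi type of a product factorizes. -/
lemma sum_pi_prod {ι : Type*} [Fintype ι] [DecidableEq ι] {F : ι → Type*}
    [∀ i, Fintype (F i)] (h : ∀ i, F i → ℝ) :
    ∑ g : ∀ i, F i, ∏ i, h i (g i) = ∏ i, ∑ x, h i x := by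
  rw [Finset.prod_univ_sum]
  rw [Fintype.piFinset_univ]

lemma rpow_sum {ι : Type*} (s : Finset ι) (f : ι → ℝ) :
    (2 : ℝ) ^ (∑ j ∈ s, f j) = ∏ j ∈ s, (2 : ℝ) ^ (f j) := by
  rw [Real.rpow_def_of_pos two_pos, mul_sum, Real.exp_sum]
  exact Finset.prod_congr rfl fun j _ => (Real.rpow_def_of_pos two_pos _).symm

lemma ite_zero_mul_ite_zero' {P Q : Prop} [Decidable P] [Decidable Q] (a b : ℝ) :
    (if P then a else 0) * (if Q then b else 0) = if P ∧ Q then a * b else 0 := by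
  by_cases hP : P <;> by_cases hQ : Q <;> simp [hP, hQ]

/-- Chernoff bound for i.i.d. finite-alphabet sums. -/
lemma chernoff {X : Type*} [Fintype X] (q : X → ℝ) (hq0 : ∀ x, 0 ≤ q x) (hq1 : ∑ x, q x = 1)
    (w : X → ℝ) (a : ℝ) (ha : a < ∑ x, q x * w x) :
    ∃ ρ : ℝ, 0 < ρ ∧ ρ < 1 ∧ ∀ n : ℕ, ∀ T : Finset (Fin n → X),
      (∀ ω ∈ T, ∑ j, w (ω j) < n * a) → ∑ ω ∈ T, ∏ j, q (ω j) ≤ ρ ^ n := by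
  obtain ⟨l, hl, hgl⟩ : ∃ l : ℝ, 0 < l ∧ ∑ x, q x * Real.exp (l * (a - w x)) < 1 := by
    set g : ℝ → ℝ := fun l => ∑ x, q x * Real.exp (l * (a - w x)) with hgdef
    have hg0 : g 0 = 1 := by simp [hgdef, hq1]
    have hderiv : HasDerivAt g (∑ x, q x * (a - w x)) 0 := by
      have h1 : ∀ x ∈ (univ : Finset X),
          HasDerivAt (fun l : ℝ => q x * Real.exp (l * (a - w x)))
            (q x * (a - w x)) 0 := by
        intro x _
        have h2 : HasDerivAt (fun l : ℝ => l * (a - w x)) (a - w x) 0 := by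
          simpa using (hasDerivAt_id (0:ℝ)).mul_const (a - w x)
        have h3 := h2.exp
        simpa using h3.const_mul (q x)
      simpa using HasDerivAt.fun_sum h1
    have hneg : (∑ x, q x * (a - w x)) < 0 := by
      have : ∑ x, q x * (a - w x) = (∑ x, q x) * a - ∑ x, q x * w x := by
        rw [Finset.sum_mul, ← Finset.sum_sub_distrib]
        exact Finset.sum_congr rfl fun x _ => by ring
      rw [this, hq1, one_mul]
      linarith
    rw [hasDerivAt_iff_tendsto_slope] at hderiv
    have hmono : Filter.Tendsto (slope g 0) (nhdsWithin 0 (Set.Ioi 0))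
        (nhds (∑ x, q x * (a - w x))) :=
      hderiv.mono_left (nhdsWithin_mono 0 (fun x hx => ne_of_gt hx))
    have hev : ∀ᶠ l in nhdsWithin 0 (Set.Ioi 0), slope g 0 l < 0 :=
      hmono.eventually_lt_const hneg
    have hself : ∀ᶠ l in nhdsWithin 0 (Set.Ioi 0), l ∈ Set.Ioi (0:ℝ) :=
      eventually_mem_nhdsWithin
    obtain ⟨l, hsl, hl⟩ := (hev.and hself).exists
    refine ⟨l, hl, ?_⟩
    rw [slope_def_field] at hsl
    have : (g l - g 0) / (l - 0) < 0 := hsl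
    rw [hg0, sub_zero] at this
    have := (div_neg_iff.mp this)
    have hl' : (0:ℝ) < l := hl
    rcases this with ⟨h1, h2⟩ | ⟨h1, h2⟩
    · linarith
    · linarith
  refine ⟨∑ x, q x * Real.exp (l * (a - w x)), ?_, hgl, ?_⟩
  · obtain ⟨x0, hx0⟩ : ∃ x, 0 < q x := by
      by_contra h
      push_neg at h
      have : ∀ x ∈ (univ : Finset X), q x = 0 := fun x _ => le_antisymm (h x) (hq0 x)
      rw [Finset.sum_congr rfl this] at hq1
      simp at hq1
    exact Finset.sum_pos' (fun x _ => mul_nonneg (hq0 x) (Real.exp_pos _).le)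
      ⟨x0, Finset.mem_univ x0, mul_pos hx0 (Real.exp_pos _)⟩
  · intro n T hT
    have step1 : ∑ ω ∈ T, ∏ j, q (ω j)
        ≤ ∑ ω ∈ T, ∏ j, (q (ω j) * Real.exp (l * (a - w (ω j)))) := by
      refine Finset.sum_le_sum fun ω hω => ?_
      rw [Finset.prod_mul_distrib]
      have hprod : ∏ j, Real.exp (l * (a - w (ω j)))
          = Real.exp (l * ((n : ℝ) * a - ∑ j, w (ω j))) := by
        rw [← Real.exp_sum]
        congr 1
        rw [← Finset.mul_sum]
        congr 1
        rw [Finset.sum_sub_distrib, Finset.sum_const, card_univ, Fintype.card_fin,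
          nsmul_eq_mul]
      rw [hprod]
      refine le_mul_of_one_le_right (Finset.prod_nonneg fun j _ => hq0 _) ?_
      refine Real.one_le_exp (mul_nonneg hl.le ?_)
      have := hT ω hω
      linarith
    refine step1.trans ?_
    have step2 : ∑ ω ∈ T, ∏ j, (q (ω j) * Real.exp (l * (a - w (ω j))))
        ≤ ∑ ω : Fin n → X, ∏ j, (q (ω j) * Real.exp (l * (a - w (ω j)))) :=
      Finset.sum_le_sum_of_subset_of_nonneg (Finset.subset_univ T)
        (fun ω _ _ => Finset.prod_nonneg fun j _ =>
          mul_nonneg (hq0 _) (Real.exp_pos _).le)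
    refine step2.trans ?_
    rw [sum_pi_prod (fun _ x => q x * Real.exp (l * (a - w x)))]
    rw [Finset.prod_const, card_univ, Fintype.card_fin]


lemma sum_comm3 {A B D : Type*} [Fintype A] [Fintype B] [Fintype D] (f : A → B → D → ℝ) :
    ∑ a, ∑ b, ∑ d, f a b d = ∑ d, ∑ b, ∑ a, f a b d := by
  calc ∑ a, ∑ b, ∑ d, f a b d
      = ∑ a, ∑ d, ∑ b, f a b d :=
        Finset.sum_congr rfl fun a _ => Finset.sum_comm
    _ = ∑ d, ∑ a, ∑ b, f a b d := Finset.sum_comm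
    _ = ∑ d, ∑ b, ∑ a, f a b d :=
        Finset.sum_congr rfl fun d _ => Finset.sum_comm

lemma sum_comm4 {A B D E : Type*} [Fintype A] [Fintype B] [Fintype D] [Fintype E]
    (f : A → B → D → E → ℝ) :
    ∑ a, ∑ b, ∑ d, ∑ e, f a b d e = ∑ d, ∑ e, ∑ a, ∑ b, f a b d e := by
  calc ∑ a, ∑ b, ∑ d, ∑ e, f a b d e
      = ∑ a, ∑ d, ∑ b, ∑ e, f a b d e :=
        Finset.sum_congr rfl fun a _ => Finset.sum_comm
    _ = ∑ d, ∑ a, ∑ b, ∑ e, f a b d e := Finset.sum_comm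
    _ = ∑ d, ∑ a, ∑ e, ∑ b, f a b d e :=
        Finset.sum_congr rfl fun d _ => Finset.sum_congr rfl fun a _ =>
          Finset.sum_comm
    _ = ∑ d, ∑ e, ∑ a, ∑ b, f a b d e :=
        Finset.sum_congr rfl fun d _ => Finset.sum_comm

set_option linter.unusedSectionVars false
set_option linter.unusedVariables false

section Aux

variable {t : ℕ} {M : Fin t → Type} [∀ i, Fintype (M i)] [∀ i, DecidableEq (M i)]
  {C : Type} [Fintype C] [DecidableEq C]

variable (p : ((∀ i, M i) × C) → ℝ)

lemma pC_nonneg (hp0 : ∀ x, 0 ≤ p x) (c : C) : 0 ≤ pC p c :=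
  Finset.sum_nonneg fun m _ => hp0 _

lemma pSC_nonneg (hp0 : ∀ x, 0 ≤ p x) (S : Finset (Fin t)) (f : ∀ i : S, M i.1) (c : C) :
    0 ≤ pSC p S f c := by
  refine Finset.sum_nonneg fun m _ => ?_
  split
  · exact hp0 _
  · exact le_rfl

lemma pSC_le_pC (hp0 : ∀ x, 0 ≤ p x) (S : Finset (Fin t)) (f : ∀ i : S, M i.1) (c : C) :
    pSC p S f c ≤ pC p c := by
  refine Finset.sum_le_sum fun m _ => ?_
  split
  · exact le_rfl
  · exact hp0 _

lemma p_le_pSC (hp0 : ∀ x, 0 ≤ p x) (S : Finset (Fin t)) (x : ((∀ i, M i) × C)) :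
    p x ≤ pSC p S (fun i => x.1 i.1) x.2 := by
  have h := Finset.single_le_sum
    (f := fun m : ∀ i, M i => if ∀ i : S, m i.1 = x.1 i.1 then p (m, x.2) else 0)
    (fun m _ => by split; exacts [hp0 _, le_rfl]) (Finset.mem_univ x.1)
  simpa [pSC] using h

lemma p_le_pC (hp0 : ∀ x, 0 ≤ p x) (x : ((∀ i, M i) × C)) : p x ≤ pC p x.2 := by
  have h := Finset.single_le_sum (f := fun m : ∀ i, M i => p (m, x.2))
    (fun m _ => hp0 _) (Finset.mem_univ x.1)
  simpa [pC] using h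

lemma sum_pC (hp1 : ∑ x, p x = 1) : ∑ c, pC p c = 1 := by
  rw [← hp1, Fintype.sum_prod_type]
  rw [Finset.sum_comm]
  rfl

lemma pSC_empty (f : ∀ i : (∅ : Finset (Fin t)), M i.1) (c : C) :
    pSC p ∅ f c = pC p c := by
  unfold pSC pC
  refine Finset.sum_congr rfl fun m _ => ?_
  rw [if_pos]
  intro i
  exact absurd i.2 (Finset.notMem_empty _)

/-- Per-symbol information density. -/
def wt (S : Finset (Fin t)) (x : ((∀ i, M i) × C)) : ℝ :=
  - Real.logb 2 (pSC p S (fun i => x.1 i.1) x.2 / pC p x.2)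

lemma condEnt_eq_sum (S : Finset (Fin t)) :
    condEnt p S = ∑ x, p x * wt p S x := by
  unfold condEnt
  have step1 : ∀ f : ∀ i : S, M i.1, ∀ c : C,
      pSC p S f c * Real.logb 2 (pSC p S f c / pC p c)
      = ∑ m : ∀ i, M i, if ∀ i : S, m i.1 = f i
          then p (m, c) * Real.logb 2 (pSC p S f c / pC p c) else 0 := by
    intro f c
    rw [pSC, Finset.sum_mul]
    exact Finset.sum_congr rfl fun m _ => by rw [ite_mul, zero_mul]
  calc - ∑ f : ∀ i : S, M i.1, ∑ c : C,
        pSC p S f c * Real.logb 2 (pSC p S f c / pC p c)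
      = - ∑ f : ∀ i : S, M i.1, ∑ c : C, ∑ m : ∀ i, M i,
          if ∀ i : S, m i.1 = f i
          then p (m, c) * Real.logb 2 (pSC p S f c / pC p c) else 0 := by
        congr 1
        exact Finset.sum_congr rfl fun f _ => Finset.sum_congr rfl fun c _ => step1 f c
    _ = - ∑ m : ∀ i, M i, ∑ c : C, ∑ f : ∀ i : S, M i.1,
          if ∀ i : S, m i.1 = f i
          then p (m, c) * Real.logb 2 (pSC p S f c / pC p c) else 0 := by
        congr 1
        exact sum_comm3 _
    _ = ∑ x : ((∀ i, M i) × C), p x * wt p S x := by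
        rw [Fintype.sum_prod_type]
        rw [← neg_one_mul, Finset.mul_sum]
        refine Finset.sum_congr rfl fun m _ => ?_
        rw [Finset.mul_sum]
        refine Finset.sum_congr rfl fun c _ => ?_
        have hcoll : (∑ f : ∀ i : S, M i.1, if ∀ i : S, m i.1 = f i
            then p (m, c) * Real.logb 2 (pSC p S f c / pC p c) else 0)
            = p (m, c) * Real.logb 2 (pSC p S (fun i => m i.1) c / pC p c) := by
          have hiff : ∀ f : ∀ i : S, M i.1,
              (∀ i : S, m i.1 = f i) ↔ ((fun i : S => m i.1) = f) := fun f =>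
            funext_iff.symm
          calc (∑ f : ∀ i : S, M i.1, if ∀ i : S, m i.1 = f i
              then p (m, c) * Real.logb 2 (pSC p S f c / pC p c) else 0)
              = ∑ f : ∀ i : S, M i.1, if (fun i : S => m i.1) = f
                then p (m, c) * Real.logb 2 (pSC p S f c / pC p c) else 0 := by
                refine Finset.sum_congr rfl fun f _ => ?_
                simp only [hiff]
            _ = _ := by rw [Finset.sum_ite_eq]; simp
        rw [hcoll, wt]
        ring

open scoped Classical

/-- Jointly typical sequences. -/
def Typ (δ : ℝ) {n : ℕ} (ω : Fin n → ((∀ i, M i) × C)) : Prop :=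
  ∀ S : Finset (Fin t), S.Nonempty → (n : ℝ) * (condEnt p S - δ) ≤ ∑ j, wt p S (ω j)

/-- The iid pmf. -/
def pn {n : ℕ} (ω : Fin n → ((∀ i, M i) × C)) : ℝ := ∏ j, p (ω j)

variable (R : Fin t → ℝ)

/-- Typical part of the induced pmf. -/
def Ptil (δ : ℝ) (n : ℕ) (𝔟 : ∀ i, (Fin n → M i) → Fin (nbins R n i))
    (c : Fin n → C) (mb : ∀ i, Fin (nbins R n i)) : ℝ :=
  ∑ ω : Fin n → ((∀ i, M i) × C),
    if Typ p δ ω ∧ ((∀ j, (ω j).2 = c j) ∧ (∀ i, 𝔟 i (fun j => (ω j).1 i) = mb i))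
    then pn p ω else 0

/-- Atypical part of the induced pmf. -/
def Phat (δ : ℝ) (n : ℕ) (𝔟 : ∀ i, (Fin n → M i) → Fin (nbins R n i))
    (c : Fin n → C) (mb : ∀ i, Fin (nbins R n i)) : ℝ :=
  ∑ ω : Fin n → ((∀ i, M i) × C),
    if ¬ Typ p δ ω ∧ ((∀ j, (ω j).2 = c j) ∧ (∀ i, 𝔟 i (fun j => (ω j).1 i) = mb i))
    then pn p ω else 0

/-- Total typical probability. -/
def tau (δ : ℝ) (n : ℕ) : ℝ :=
  ∑ ω : Fin n → ((∀ i, M i) × C), if Typ p δ ω then pn p ω else 0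

/-- Total atypical probability. -/
def eps (δ : ℝ) (n : ℕ) : ℝ :=
  ∑ ω : Fin n → ((∀ i, M i) × C), if ¬ Typ p δ ω then pn p ω else 0

lemma pn_nonneg (hp0 : ∀ x, 0 ≤ p x) {n : ℕ} (ω : Fin n → ((∀ i, M i) × C)) :
    0 ≤ pn p ω := Finset.prod_nonneg fun j _ => hp0 _

lemma sum_pn (hp1 : ∑ x, p x = 1) (n : ℕ) :
    ∑ ω : Fin n → ((∀ i, M i) × C), pn p ω = 1 := by
  unfold pn
  rw [sum_pi_prod (fun _ x => p x)]
  simp [hp1]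

lemma tau_add_eps (hp1 : ∑ x, p x = 1) (δ : ℝ) (n : ℕ) :
    tau p δ n + eps p δ n = 1 := by
  unfold tau eps
  rw [← Finset.sum_add_distrib, ← sum_pn p hp1 n]
  refine Finset.sum_congr rfl fun ω _ => ?_
  by_cases h : Typ p δ ω <;> simp [h]

lemma tau_nonneg (hp0 : ∀ x, 0 ≤ p x) (δ : ℝ) (n : ℕ) : 0 ≤ tau p δ n :=
  Finset.sum_nonneg fun ω _ => by
    split
    · exact pn_nonneg p hp0 ω
    · exact le_rfl

lemma eps_nonneg (hp0 : ∀ x, 0 ≤ p x) (δ : ℝ) (n : ℕ) : 0 ≤ eps p δ n :=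
  Finset.sum_nonneg fun ω _ => by
    split
    · exact pn_nonneg p hp0 ω
    · exact le_rfl

lemma Pind_split (δ : ℝ) (n : ℕ) (𝔟 : ∀ i, (Fin n → M i) → Fin (nbins R n i))
    (c : Fin n → C) (mb : ∀ i, Fin (nbins R n i)) :
    Pind p R n 𝔟 c mb = Ptil p R δ n 𝔟 c mb + Phat p R δ n 𝔟 c mb := by
  unfold Pind Ptil Phat
  rw [← Finset.sum_add_distrib]
  refine Finset.sum_congr rfl fun ω _ => ?_
  by_cases hT : Typ p δ ω <;>
    by_cases hAB : (∀ j, (ω j).2 = c j) ∧ (∀ i, 𝔟 i (fun j => (ω j).1 i) = mb i) <;>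
      simp [hT, hAB, pn]

lemma sum_match (n : ℕ) (𝔟 : ∀ i, (Fin n → M i) → Fin (nbins R n i))
    (F : (Fin n → ((∀ i, M i) × C)) → ℝ) :
    ∑ c : Fin n → C, ∑ mb : ∀ i, Fin (nbins R n i),
      ∑ ω : Fin n → ((∀ i, M i) × C),
        (if (∀ j, (ω j).2 = c j) ∧ (∀ i, 𝔟 i (fun j => (ω j).1 i) = mb i)
         then F ω else 0)
    = ∑ ω : Fin n → ((∀ i, M i) × C), F ω := by
  rw [sum_comm3]
  refine Finset.sum_congr rfl fun ω _ => ?_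
  have h1 : ∀ c : Fin n → C, (∀ j, (ω j).2 = c j) ↔ ((fun j => (ω j).2) = c) :=
    fun c => funext_iff.symm
  have h2 : ∀ mb : ∀ i, Fin (nbins R n i),
      (∀ i, 𝔟 i (fun j => (ω j).1 i) = mb i) ↔
        ((fun i => 𝔟 i (fun j => (ω j).1 i)) = mb) := fun mb => funext_iff.symm
  simp only [h1, h2, ite_and, Finset.sum_ite_eq, Finset.mem_univ, if_true]

lemma sum_Ptil (δ : ℝ) (n : ℕ) (𝔟 : ∀ i, (Fin n → M i) → Fin (nbins R n i)) :
    ∑ c : Fin n → C, ∑ mb : ∀ i, Fin (nbins R n i), Ptil p R δ n 𝔟 c mb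
    = tau p δ n := by
  unfold Ptil tau
  rw [← sum_match R n 𝔟 (fun ω => if Typ p δ ω then pn p ω else 0)]
  refine Finset.sum_congr rfl fun c _ => Finset.sum_congr rfl fun mb _ =>
    Finset.sum_congr rfl fun ω _ => ?_
  by_cases hT : Typ p δ ω <;>
    by_cases hAB : (∀ j, (ω j).2 = c j) ∧ (∀ i, 𝔟 i (fun j => (ω j).1 i) = mb i) <;>
      simp [hT, hAB]

lemma sum_Phat (δ : ℝ) (n : ℕ) (𝔟 : ∀ i, (Fin n → M i) → Fin (nbins R n i)) :
    ∑ c : Fin n → C, ∑ mb : ∀ i, Fin (nbins R n i), Phat p R δ n 𝔟 c mb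
    = eps p δ n := by
  unfold Phat eps
  rw [← sum_match R n 𝔟 (fun ω => if ¬ Typ p δ ω then pn p ω else 0)]
  refine Finset.sum_congr rfl fun c _ => Finset.sum_congr rfl fun mb _ =>
    Finset.sum_congr rfl fun ω _ => ?_
  by_cases hT : Typ p δ ω <;>
    by_cases hAB : (∀ j, (ω j).2 = c j) ∧ (∀ i, 𝔟 i (fun j => (ω j).1 i) = mb i) <;>
      simp [hT, hAB]

lemma nbins_pos (n : ℕ) (i : Fin t) : 0 < nbins R n i :=
  Nat.ceil_pos.mpr (Real.rpow_pos_of_pos two_pos _)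

lemma sum_Q (hp1 : ∑ x, p x = 1) (n : ℕ) :
    ∑ c : Fin n → C, ∑ mb : ∀ i, Fin (nbins R n i), Qideal p R n c mb = 1 := by
  unfold Qideal
  have h1 : ∑ c : Fin n → C, ∏ j, pC p (c j) = 1 := by
    rw [sum_pi_prod (fun _ x => pC p x)]
    simp [sum_pC p hp1]
  have h2 : ∑ _mb : ∀ i, Fin (nbins R n i), ∏ i, ((nbins R n i : ℝ))⁻¹ = 1 := by
    rw [Finset.sum_const, card_univ, Fintype.card_pi]
    simp only [Fintype.card_fin, nsmul_eq_mul]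
    push_cast
    rw [← Finset.prod_mul_distrib]
    refine Finset.prod_eq_one fun i _ => ?_
    exact mul_inv_cancel₀ (Nat.cast_ne_zero.mpr (nbins_pos R n i).ne')
  calc ∑ c : Fin n → C, ∑ _mb : ∀ i, Fin (nbins R n i),
        (∏ j, pC p (c j)) * ∏ i, ((nbins R n i : ℝ))⁻¹
      = ∑ c : Fin n → C, (∏ j, pC p (c j)) *
          ∑ _mb : ∀ i, Fin (nbins R n i), ∏ i, ((nbins R n i : ℝ))⁻¹ := by
        refine Finset.sum_congr rfl fun c _ => ?_
        rw [← Finset.mul_sum]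
    _ = 1 := by rw [h2]; simp [h1]

lemma Qideal_nonneg (hp0 : ∀ x, 0 ≤ p x) (n : ℕ) (c : Fin n → C)
    (mb : ∀ i, Fin (nbins R n i)) : 0 ≤ Qideal p R n c mb :=
  mul_nonneg (Finset.prod_nonneg fun j _ => pC_nonneg p hp0 _)
    (Finset.prod_nonneg fun i _ => by positivity)

lemma pn_zero_of_match (hp0 : ∀ x, 0 ≤ p x) {n : ℕ} {c : Fin n → C}
    {ω : Fin n → ((∀ i, M i) × C)} (hm : ∀ j, (ω j).2 = c j)
    {j0 : Fin n} (h0 : pC p (c j0) = 0) : pn p ω = 0 := by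
  refine Finset.prod_eq_zero (Finset.mem_univ j0) ?_
  have h1 : p (ω j0) ≤ pC p (c j0) := by
    rw [← hm j0]; exact p_le_pC p hp0 _
  exact le_antisymm (h0 ▸ h1) (hp0 _)

lemma Qideal_zero_cases (hp0 : ∀ x, 0 ≤ p x) {n : ℕ} {c : Fin n → C}
    {mb : ∀ i, Fin (nbins R n i)} (h : Qideal p R n c mb = 0) :
    ∃ j0, pC p (c j0) = 0 := by
  unfold Qideal at h
  have h2 : (∏ i, ((nbins R n i : ℝ))⁻¹) ≠ 0 :=
    Finset.prod_ne_zero_iff.mpr fun i _ => by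
      exact inv_ne_zero (Nat.cast_ne_zero.mpr (nbins_pos R n i).ne')
  have h3 : (∏ j, pC p (c j)) = 0 := by
    rcases mul_eq_zero.mp h with h | h
    · exact h
    · exact absurd h h2
  obtain ⟨j0, _, hj0⟩ := Finset.prod_eq_zero_iff.mp h3
  exact ⟨j0, hj0⟩

lemma Ptil_zero_of_Q_zero (hp0 : ∀ x, 0 ≤ p x) {δ : ℝ} {n : ℕ}
    {𝔟 : ∀ i, (Fin n → M i) → Fin (nbins R n i)} {c : Fin n → C}
    {mb : ∀ i, Fin (nbins R n i)} (h : Qideal p R n c mb = 0) :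
    Ptil p R δ n 𝔟 c mb = 0 := by
  obtain ⟨j0, hj0⟩ := Qideal_zero_cases p R hp0 h
  refine Finset.sum_eq_zero fun ω _ => ?_
  split
  · next hcond => exact pn_zero_of_match p hp0 hcond.2.1 hj0
  · rfl

lemma avg_sqrt {B : Type*} [Fintype B] (V : B → ℝ) (hV : ∀ b, 0 ≤ V b) :
    (Fintype.card B : ℝ)⁻¹ * ∑ b, Real.sqrt (V b)
      ≤ Real.sqrt ((Fintype.card B : ℝ)⁻¹ * ∑ b, V b) := by
  rcases Nat.eq_zero_or_pos (Fintype.card B) with h | h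
  · have : (univ : Finset B) = ∅ := Finset.card_eq_zero.mp (by simpa using h)
    simp [this]
  set a : ℝ := (Fintype.card B : ℝ)⁻¹ with ha
  have ha0 : 0 < a := by positivity
  have hcs := Finset.sum_mul_sq_le_sq_mul_sq univ
    (fun _ : B => Real.sqrt a) (fun b => Real.sqrt (a * V b))
  have hpt : ∀ b : B, Real.sqrt a * Real.sqrt (a * V b) = a * Real.sqrt (V b) := by
    intro b
    rw [Real.sqrt_mul ha0.le, ← mul_assoc, Real.mul_self_sqrt ha0.le]
  have h1 : (∑ b : B, Real.sqrt a * Real.sqrt (a * V b)) = a * ∑ b, Real.sqrt (V b) := by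
    rw [Finset.mul_sum]
    exact Finset.sum_congr rfl fun b _ => hpt b
  have h2 : ∑ _b : B, (Real.sqrt a) ^ 2 = 1 := by
    rw [Finset.sum_const, card_univ, Real.sq_sqrt ha0.le, nsmul_eq_mul, ha]
    field_simp
  have h3 : ∀ b : B, (Real.sqrt (a * V b)) ^ 2 = a * V b := fun b =>
    Real.sq_sqrt (mul_nonneg ha0.le (hV b))
  rw [h1, h2, one_mul] at hcs
  have h4 : (∑ b : B, Real.sqrt (a * V b) ^ 2) = a * ∑ b, V b := by
    rw [Finset.mul_sum]
    exact Finset.sum_congr rfl fun b _ => h3 b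
  rw [h4] at hcs
  have h5 : 0 ≤ a * ∑ b, Real.sqrt (V b) :=
    mul_nonneg ha0.le (Finset.sum_nonneg fun b _ => Real.sqrt_nonneg _)
  calc a * ∑ b, Real.sqrt (V b) = Real.sqrt ((a * ∑ b, Real.sqrt (V b)) ^ 2) :=
        (Real.sqrt_sq h5).symm
    _ ≤ Real.sqrt (a * ∑ b, V b) := Real.sqrt_le_sqrt hcs

lemma tv_le_sqrt (hp0 : ∀ x, 0 ≤ p x) (hp1 : ∑ x, p x = 1) (δ : ℝ) (n : ℕ)
    (𝔟 : ∀ i, (Fin n → M i) → Fin (nbins R n i)) :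
    ∑ c : Fin n → C, ∑ mb : ∀ i, Fin (nbins R n i),
      |Ptil p R δ n 𝔟 c mb - Qideal p R n c mb|
    ≤ Real.sqrt (∑ c : Fin n → C, ∑ mb : ∀ i, Fin (nbins R n i),
        (Ptil p R δ n 𝔟 c mb - Qideal p R n c mb) ^ 2 * (Qideal p R n c mb)⁻¹) := by
  set Z := (Fin n → C) × (∀ i, Fin (nbins R n i))
  have key : ∀ (F G : ((Fin n → C) → (∀ i, Fin (nbins R n i)) → ℝ)),
      (∀ c mb, F c mb = G c mb) → ∑ c, ∑ mb, F c mb = ∑ c, ∑ mb, G c mb :=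
    fun F G h => Finset.sum_congr rfl fun c _ => Finset.sum_congr rfl fun mb _ => h c mb
  have hptw : ∀ (c : Fin n → C) (mb : ∀ i, Fin (nbins R n i)),
      |Ptil p R δ n 𝔟 c mb - Qideal p R n c mb|
      = Real.sqrt (Qideal p R n c mb) *
        Real.sqrt ((Ptil p R δ n 𝔟 c mb - Qideal p R n c mb) ^ 2 *
          (Qideal p R n c mb)⁻¹) := by
    intro c mb
    by_cases hQ : Qideal p R n c mb = 0
    · rw [hQ, Ptil_zero_of_Q_zero p R hp0 hQ]
      simp
    · have hQpos : 0 < Qideal p R n c mb :=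
        lt_of_le_of_ne (Qideal_nonneg p R hp0 n c mb) (Ne.symm hQ)
      rw [← Real.sqrt_mul hQpos.le]
      have : Qideal p R n c mb * ((Ptil p R δ n 𝔟 c mb - Qideal p R n c mb) ^ 2 *
          (Qideal p R n c mb)⁻¹) = (Ptil p R δ n 𝔟 c mb - Qideal p R n c mb) ^ 2 := by
        field_simp
      rw [this, Real.sqrt_sq_eq_abs]
  have hA0 : 0 ≤ ∑ c, ∑ mb, |Ptil p R δ n 𝔟 c mb - Qideal p R n c mb| :=
    Finset.sum_nonneg fun c _ => Finset.sum_nonneg fun mb _ => abs_nonneg _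
  have hcs := Finset.sum_mul_sq_le_sq_mul_sq (univ : Finset Z)
    (fun z => Real.sqrt (Qideal p R n z.1 z.2))
    (fun z => Real.sqrt ((Ptil p R δ n 𝔟 z.1 z.2 - Qideal p R n z.1 z.2) ^ 2 *
        (Qideal p R n z.1 z.2)⁻¹))
  rw [Fintype.sum_prod_type (f := fun z : Z => Real.sqrt (Qideal p R n z.1 z.2) *
      Real.sqrt ((Ptil p R δ n 𝔟 z.1 z.2 - Qideal p R n z.1 z.2) ^ 2 *
        (Qideal p R n z.1 z.2)⁻¹))] at hcs
  rw [Fintype.sum_prod_type (f := fun z : Z =>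
      Real.sqrt (Qideal p R n z.1 z.2) ^ 2)] at hcs
  rw [Fintype.sum_prod_type (f := fun z : Z =>
      Real.sqrt ((Ptil p R δ n 𝔟 z.1 z.2 - Qideal p R n z.1 z.2) ^ 2 *
        (Qideal p R n z.1 z.2)⁻¹) ^ 2)] at hcs
  have e1 : ∑ c : Fin n → C, ∑ mb : ∀ i, Fin (nbins R n i),
      Real.sqrt (Qideal p R n c mb) *
        Real.sqrt ((Ptil p R δ n 𝔟 c mb - Qideal p R n c mb) ^ 2 *
          (Qideal p R n c mb)⁻¹)
      = ∑ c, ∑ mb, |Ptil p R δ n 𝔟 c mb - Qideal p R n c mb| :=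
    key _ _ fun c mb => (hptw c mb).symm
  have e2 : ∑ c : Fin n → C, ∑ mb : ∀ i, Fin (nbins R n i),
      Real.sqrt (Qideal p R n c mb) ^ 2 = 1 := by
    rw [← sum_Q p R hp1 n]
    exact key _ _ fun c mb => Real.sq_sqrt (Qideal_nonneg p R hp0 n c mb)
  have e3 : ∑ c : Fin n → C, ∑ mb : ∀ i, Fin (nbins R n i),
      Real.sqrt ((Ptil p R δ n 𝔟 c mb - Qideal p R n c mb) ^ 2 *
        (Qideal p R n c mb)⁻¹) ^ 2
      = ∑ c, ∑ mb, (Ptil p R δ n 𝔟 c mb - Qideal p R n c mb) ^ 2 *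
          (Qideal p R n c mb)⁻¹ :=
    key _ _ fun c mb => Real.sq_sqrt
      (mul_nonneg (sq_nonneg _) (inv_nonneg.mpr (Qideal_nonneg p R hp0 n c mb)))
  rw [e1, e2, e3, one_mul] at hcs
  calc ∑ c, ∑ mb, |Ptil p R δ n 𝔟 c mb - Qideal p R n c mb|
      = Real.sqrt ((∑ c, ∑ mb, |Ptil p R δ n 𝔟 c mb - Qideal p R n c mb|) ^ 2) :=
        (Real.sqrt_sq hA0).symm
    _ ≤ _ := Real.sqrt_le_sqrt hcs

lemma V_eq (hp0 : ∀ x, 0 ≤ p x) (hp1 : ∑ x, p x = 1) (δ : ℝ) (n : ℕ)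
    (𝔟 : ∀ i, (Fin n → M i) → Fin (nbins R n i)) :
    ∑ c : Fin n → C, ∑ mb : ∀ i, Fin (nbins R n i),
      (Ptil p R δ n 𝔟 c mb - Qideal p R n c mb) ^ 2 * (Qideal p R n c mb)⁻¹
    = (∑ c : Fin n → C, ∑ mb : ∀ i, Fin (nbins R n i),
        (Ptil p R δ n 𝔟 c mb) ^ 2 * (Qideal p R n c mb)⁻¹)
      - 2 * tau p δ n + 1 := by
  have hptw : ∀ (c : Fin n → C) (mb : ∀ i, Fin (nbins R n i)),
      (Ptil p R δ n 𝔟 c mb - Qideal p R n c mb) ^ 2 * (Qideal p R n c mb)⁻¹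
      = (Ptil p R δ n 𝔟 c mb) ^ 2 * (Qideal p R n c mb)⁻¹
        - 2 * Ptil p R δ n 𝔟 c mb + Qideal p R n c mb := by
    intro c mb
    by_cases hQ : Qideal p R n c mb = 0
    · rw [hQ, Ptil_zero_of_Q_zero p R hp0 hQ]
      ring
    · field_simp
      ring
  calc ∑ c : Fin n → C, ∑ mb : ∀ i, Fin (nbins R n i),
        (Ptil p R δ n 𝔟 c mb - Qideal p R n c mb) ^ 2 * (Qideal p R n c mb)⁻¹
      = ∑ c : Fin n → C, ∑ mb : ∀ i, Fin (nbins R n i),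
          ((Ptil p R δ n 𝔟 c mb) ^ 2 * (Qideal p R n c mb)⁻¹
            - 2 * Ptil p R δ n 𝔟 c mb + Qideal p R n c mb) :=
        Finset.sum_congr rfl fun c _ => Finset.sum_congr rfl fun mb _ => hptw c mb
    _ = (∑ c : Fin n → C, ∑ mb : ∀ i, Fin (nbins R n i),
          (Ptil p R δ n 𝔟 c mb) ^ 2 * (Qideal p R n c mb)⁻¹)
        - 2 * (∑ c : Fin n → C, ∑ mb : ∀ i, Fin (nbins R n i), Ptil p R δ n 𝔟 c mb)
        + ∑ c : Fin n → C, ∑ mb : ∀ i, Fin (nbins R n i), Qideal p R n c mb := by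
        rw [Finset.mul_sum, ← Finset.sum_sub_distrib, ← Finset.sum_add_distrib]
        refine Finset.sum_congr rfl fun c _ => ?_
        rw [Finset.mul_sum, ← Finset.sum_sub_distrib, ← Finset.sum_add_distrib]
    _ = _ := by rw [sum_Ptil, sum_Q p R hp1 n]

lemma filter_mem_univ {A : Type*} [Fintype A] [DecidableEq A] (s : Finset A) :
    (univ : Finset A).filter (fun x => x ∈ s) = s := by
  ext x; simp

lemma filter_not_mem_univ {A : Type*} [Fintype A] [DecidableEq A] (s : Finset A) :
    (univ : Finset A).filter (fun x => x ∉ s) = sᶜ := by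
  ext x; simp

lemma count_fix {A : Type*} [Fintype A] [DecidableEq A] {k : ℕ} (hk : 0 < k)
    (a a' : A) (b : Fin k) :
    ∑ g : A → Fin k, (if g a = b ∧ g a' = b then (1:ℝ) else 0)
    = (Fintype.card (A → Fin k) : ℝ) * ((k:ℝ)⁻¹ * (if a = a' then 1 else (k:ℝ)⁻¹)) := by
  have hk0 : (k : ℝ) ≠ 0 := Nat.cast_ne_zero.mpr hk.ne'
  have step : ∀ g : A → Fin k, (if g a = b ∧ g a' = b then (1:ℝ) else 0)
      = ∏ x : A, (if x ∈ ({a, a'} : Finset A) then (if g x = b then (1:ℝ) else 0) else 1) := by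
    intro g
    rw [Finset.prod_ite, Finset.prod_const_one, mul_one, filter_mem_univ,
      Finset.prod_ite_zero]
    have : (∀ x ∈ ({a, a'} : Finset A), g x = b) ↔ (g a = b ∧ g a' = b) := by
      simp [Finset.forall_mem_insert]
    simp [this]
  rw [Finset.sum_congr rfl fun g _ => step g]
  rw [sum_pi_prod (fun x (v : Fin k) => if x ∈ ({a, a'} : Finset A)
    then (if v = b then (1:ℝ) else 0) else 1)]
  have inner : ∀ x : A, (∑ v : Fin k, if x ∈ ({a, a'} : Finset A)
      then (if v = b then (1:ℝ) else 0) else 1)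
      = if x ∈ ({a, a'} : Finset A) then 1 else (k : ℝ) := by
    intro x
    by_cases hx : x ∈ ({a, a'} : Finset A) <;> simp [hx]
  rw [Finset.prod_congr rfl fun x _ => inner x]
  rw [Finset.prod_ite, Finset.prod_const_one, one_mul, Finset.prod_const,
    filter_not_mem_univ, Finset.card_compl]
  rw [Fintype.card_fun]
  push_cast
  simp only [Fintype.card_fin]
  have hcardA : 1 ≤ Fintype.card A := Fintype.card_pos_iff.mpr ⟨a⟩
  by_cases haa : a = a'
  · have h1 : ({a, a'} : Finset A).card = 1 := by subst haa; simp
    rw [h1, if_pos haa, mul_one]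
    rw [pow_sub₀ _ hk0 hcardA, pow_one]
  · have h1 : ({a, a'} : Finset A).card = 2 := Finset.card_pair haa
    rw [h1, if_neg haa]
    have h2 : 2 ≤ Fintype.card A := Fintype.one_lt_card_iff.mpr ⟨a, a', haa⟩
    rw [pow_sub₀ _ hk0 h2, pow_two, mul_inv]

variable {t : ℕ} {M : Fin t → Type} [∀ i, Fintype (M i)] [∀ i, DecidableEq (M i)]
  {C : Type} [Fintype C] [DecidableEq C]

lemma card_binnings_pos (R : Fin t → ℝ) (n : ℕ) :
    0 < Fintype.card (∀ i, (Fin n → M i) → Fin (nbins R n i)) :=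
  Fintype.card_pos_iff.mpr ⟨fun _ _ => ⟨0, nbins_pos R n _⟩⟩

lemma bin_avg (R : Fin t → ℝ) (n : ℕ) (m m' : ∀ i, Fin n → M i) :
    (Fintype.card (∀ i, (Fin n → M i) → Fin (nbins R n i)) : ℝ)⁻¹ *
      ∑ 𝔟 : ∀ i, (Fin n → M i) → Fin (nbins R n i), ∑ mb : ∀ i, Fin (nbins R n i),
        (if (∀ i, 𝔟 i (m i) = mb i) ∧ (∀ i, 𝔟 i (m' i) = mb i) then (1:ℝ) else 0)
    = ∏ i, (if m i = m' i then 1 else ((nbins R n i : ℝ))⁻¹) := by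
  rw [Finset.sum_comm]
  have inner : ∀ mb : ∀ i, Fin (nbins R n i),
      (∑ 𝔟 : ∀ i, (Fin n → M i) → Fin (nbins R n i),
        (if (∀ i, 𝔟 i (m i) = mb i) ∧ (∀ i, 𝔟 i (m' i) = mb i) then (1:ℝ) else 0))
      = ∏ i, ((Fintype.card ((Fin n → M i) → Fin (nbins R n i)) : ℝ) *
          (((nbins R n i : ℝ))⁻¹ *
            (if m i = m' i then 1 else ((nbins R n i : ℝ))⁻¹))) := by
    intro mb
    have hcond : ∀ 𝔟 : ∀ i, (Fin n → M i) → Fin (nbins R n i),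
        (if (∀ i, 𝔟 i (m i) = mb i) ∧ (∀ i, 𝔟 i (m' i) = mb i) then (1:ℝ) else 0)
        = ∏ i, (if 𝔟 i (m i) = mb i ∧ 𝔟 i (m' i) = mb i then (1:ℝ) else 0) := by
      intro 𝔟
      rw [Finset.prod_ite_zero, Finset.prod_const_one]
      have : ((∀ i, 𝔟 i (m i) = mb i) ∧ (∀ i, 𝔟 i (m' i) = mb i))
          ↔ (∀ i ∈ (univ : Finset (Fin t)), 𝔟 i (m i) = mb i ∧ 𝔟 i (m' i) = mb i) := by
        simp [forall_and]
      simp [this]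
    rw [Finset.sum_congr rfl fun 𝔟 _ => hcond 𝔟]
    rw [sum_pi_prod (fun i (g : (Fin n → M i) → Fin (nbins R n i)) =>
      if g (m i) = mb i ∧ g (m' i) = mb i then (1:ℝ) else 0)]
    exact Finset.prod_congr rfl fun i _ => count_fix (nbins_pos R n i) (m i) (m' i) (mb i)
  rw [Finset.sum_congr rfl fun mb _ => inner mb]
  rw [Finset.sum_const, card_univ, nsmul_eq_mul]
  rw [Fintype.card_pi, Fintype.card_pi]
  simp only [Fintype.card_fin]
  push_cast
  have hc : ∀ i : Fin t, ((Fintype.card ((Fin n → M i) → Fin (nbins R n i)) : ℝ)) ≠ 0 := by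
    intro i
    have h0 : 0 < Fintype.card ((Fin n → M i) → Fin (nbins R n i)) :=
      Fintype.card_pos_iff.mpr ⟨fun _ => ⟨0, nbins_pos R n i⟩⟩
    exact_mod_cast h0.ne'
  have hk : ∀ i : Fin t, ((nbins R n i : ℝ)) ≠ 0 :=
    fun i => Nat.cast_ne_zero.mpr (nbins_pos R n i).ne'
  rw [← Finset.prod_inv_distrib, ← Finset.prod_mul_distrib, ← Finset.prod_mul_distrib]
  refine Finset.prod_congr rfl fun i _ => ?_
  have hstep : ((Fintype.card ((Fin n → M i) → Fin (nbins R n i)) : ℝ))⁻¹ *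
      ((nbins R n i : ℝ) * ((Fintype.card ((Fin n → M i) → Fin (nbins R n i)) : ℝ) *
        (((nbins R n i : ℝ))⁻¹ * (if m i = m' i then 1 else ((nbins R n i : ℝ))⁻¹))))
      = (((Fintype.card ((Fin n → M i) → Fin (nbins R n i)) : ℝ))⁻¹ *
          (Fintype.card ((Fin n → M i) → Fin (nbins R n i)) : ℝ)) *
        (((nbins R n i : ℝ)) * ((nbins R n i : ℝ))⁻¹) *
        (if m i = m' i then 1 else ((nbins R n i : ℝ))⁻¹) := by ring
  rw [hstep, inv_mul_cancel₀ (hc i), mul_inv_cancel₀ (hk i), one_mul, one_mul]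

lemma c_collapse {n : ℕ} (ω ω' : Fin n → ((∀ i, M i) × C)) (F : (Fin n → C) → ℝ) :
    ∑ c : Fin n → C, (if (∀ j, (ω j).2 = c j) ∧ (∀ j, (ω' j).2 = c j) then F c else 0)
    = if (∀ j, (ω' j).2 = (ω j).2) then F (fun j => (ω j).2) else 0 := by
  have h1 : ∀ c : Fin n → C, (∀ j, (ω j).2 = c j) ↔ ((fun j => (ω j).2) = c) :=
    fun c => funext_iff.symm
  simp only [h1, ite_and, Finset.sum_ite_eq, Finset.mem_univ, if_true]

lemma sum_match_S (p : ((∀ i, M i) × C) → ℝ) (S : Finset (Fin t)) {n : ℕ}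
    (ω : Fin n → ((∀ i, M i) × C)) :
    ∑ ω' : Fin n → ((∀ i, M i) × C),
      (if (∀ j, (ω' j).2 = (ω j).2) ∧
          (∀ i ∈ S, (fun j => (ω j).1 i) = (fun j => (ω' j).1 i))
       then pn p ω' else 0)
    = ∏ j, pSC p S (fun i => (ω j).1 i.1) ((ω j).2) := by
  have hcond : ∀ ω' : Fin n → ((∀ i, M i) × C),
      ((∀ j, (ω' j).2 = (ω j).2) ∧
        (∀ i ∈ S, (fun j => (ω j).1 i) = (fun j => (ω' j).1 i)))
      ↔ (∀ j, ((ω' j).2 = (ω j).2 ∧ ∀ i : S, (ω' j).1 i.1 = (ω j).1 i.1)) := by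
    intro ω'
    rw [forall_and]
    constructor
    · rintro ⟨h1, h2⟩
      exact ⟨h1, fun j i => (congrFun (h2 i.1 i.2) j).symm⟩
    · rintro ⟨h1, h2⟩
      exact ⟨h1, fun i hi => funext fun j => (h2 j ⟨i, hi⟩).symm⟩
  have step : ∀ ω' : Fin n → ((∀ i, M i) × C),
      (if (∀ j, (ω' j).2 = (ω j).2) ∧
          (∀ i ∈ S, (fun j => (ω j).1 i) = (fun j => (ω' j).1 i))
       then pn p ω' else 0)
      = ∏ j, (if ((ω' j).2 = (ω j).2 ∧ ∀ i : S, (ω' j).1 i.1 = (ω j).1 i.1)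
          then p (ω' j) else 0) := by
    intro ω'
    rw [Finset.prod_ite_zero]
    simp only [Finset.mem_univ, forall_true_left, true_implies]
    by_cases h : (∀ j, ((ω' j).2 = (ω j).2 ∧ ∀ i : S, (ω' j).1 i.1 = (ω j).1 i.1))
    · rw [if_pos ((hcond ω').mpr h), if_pos h]
      rfl
    · rw [if_neg (fun hh => h ((hcond ω').mp hh)), if_neg h]
  rw [Finset.sum_congr rfl fun ω' _ => step ω']
  rw [sum_pi_prod (fun j (x : ((∀ i, M i) × C)) =>
    if (x.2 = (ω j).2 ∧ ∀ i : S, x.1 i.1 = (ω j).1 i.1) then p x else 0)]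
  refine Finset.prod_congr rfl fun j _ => ?_
  rw [Fintype.sum_prod_type]
  have inner : ∀ m : ∀ i, M i,
      (∑ c : C, if (c = (ω j).2 ∧ ∀ i : S, m i.1 = (ω j).1 i.1) then p (m, c) else 0)
      = if (∀ i : S, m i.1 = (ω j).1 i.1) then p (m, (ω j).2) else 0 := by
    intro m
    have : ∀ c : C, (if (c = (ω j).2 ∧ ∀ i : S, m i.1 = (ω j).1 i.1) then p (m, c) else 0)
        = if c = (ω j).2 then (if (∀ i : S, m i.1 = (ω j).1 i.1)
            then p (m, c) else 0) else 0 := by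
      intro c
      by_cases h1 : c = (ω j).2 <;> by_cases h2 : (∀ i : S, m i.1 = (ω j).1 i.1) <;>
        simp [h1, h2]
    rw [Finset.sum_congr rfl fun c _ => this c]
    rw [Finset.sum_ite_eq']
    simp
  have precond : ∀ m : ∀ i, M i, ∀ c : C,
      (if (c = (ω j).2 ∧ ∀ i : S, m i.1 = (ω j).1 i.1) then p (m, c) else 0)
      = (if ((m, c).2 = (ω j).2 ∧ ∀ i : S, (m, c).1 i.1 = (ω j).1 i.1)
         then p (m, c) else 0) := fun m c => rfl
  rw [Finset.sum_congr rfl fun m _ => (Finset.sum_congr rfl fun c _ =>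
    (precond m c).symm).trans (inner m)]
  rfl

lemma prod_k_split (R : Fin t → ℝ) (n : ℕ) (E : Finset (Fin t)) :
    ∏ i ∈ E, (nbins R n i : ℝ)
    = ∑ S ∈ (univ : Finset (Fin t)).powerset,
        (if S ⊆ E then ∏ i ∈ S, ((nbins R n i : ℝ) - 1) else 0) := by
  have h1 : ∀ i ∈ E, (nbins R n i : ℝ) = ((nbins R n i : ℝ) - 1) + 1 := by
    intro i _; ring
  rw [Finset.prod_congr rfl h1, Finset.prod_add]
  rw [← Finset.sum_filter]
  have h2 : (univ : Finset (Fin t)).powerset.filter (fun S => S ⊆ E) = E.powerset := by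
    ext S; simp [Finset.mem_powerset]
  rw [h2]
  exact Finset.sum_congr rfl fun S _ => by rw [Finset.prod_const_one, mul_one]

variable (p : ((∀ i, M i) × C) → ℝ) (R : Fin t → ℝ)

/-- Per-subset typical collision sum. -/
def BS (S : Finset (Fin t)) (δ : ℝ) (n : ℕ) : ℝ :=
  ∑ ω : Fin n → ((∀ i, M i) × C),
    if Typ p δ ω then
      pn p ω * ((∏ j, pC p ((ω j).2))⁻¹ *
        ∏ j, pSC p S (fun i => (ω j).1 i.1) ((ω j).2))
    else 0

/-- Explicit form of `(Qideal)⁻¹`. -/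
def Qinvexp (n : ℕ) (c : Fin n → C) : ℝ :=
  ((∏ j, pC p (c j)) * ∏ i, ((nbins R n i : ℝ))⁻¹)⁻¹

set_option maxHeartbeats 1000000 in
lemma Ptil_sq_expand (δ : ℝ) (n : ℕ) (𝔟 : ∀ i, (Fin n → M i) → Fin (nbins R n i))
    (c : Fin n → C) (mb : ∀ i, Fin (nbins R n i)) :
    (Ptil p R δ n 𝔟 c mb) ^ 2 * (Qideal p R n c mb)⁻¹
    = ∑ ω : Fin n → ((∀ i, M i) × C), ∑ ω' : Fin n → ((∀ i, M i) × C),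
        if (Typ p δ ω ∧ Typ p δ ω') ∧
            (((∀ j, (ω j).2 = c j) ∧ (∀ i, 𝔟 i (fun j => (ω j).1 i) = mb i)) ∧
             ((∀ j, (ω' j).2 = c j) ∧ (∀ i, 𝔟 i (fun j => (ω' j).1 i) = mb i)))
        then (pn p ω * pn p ω') * Qinvexp p R n c else 0 := by
  have hQ : (Qideal p R n c mb)⁻¹ = Qinvexp p R n c := by rw [Qideal, Qinvexp]
  rw [hQ, pow_two, Ptil, Finset.sum_mul_sum, Finset.sum_mul]
  refine Finset.sum_congr rfl fun ω _ => ?_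
  rw [Finset.sum_mul]
  refine Finset.sum_congr rfl fun ω' _ => ?_
  rw [ite_zero_mul_ite_zero', ite_mul, zero_mul]
  refine if_congr ?_ rfl rfl
  tauto

lemma inner_avg (n : ℕ) (ω ω' : Fin n → ((∀ i, M i) × C)) :
    (Fintype.card (∀ i, (Fin n → M i) → Fin (nbins R n i)) : ℝ)⁻¹ *
      ∑ 𝔟 : ∀ i, (Fin n → M i) → Fin (nbins R n i),
        ∑ c : Fin n → C, ∑ mb : ∀ i, Fin (nbins R n i),
          (if (((∀ j, (ω j).2 = c j) ∧ (∀ i, 𝔟 i (fun j => (ω j).1 i) = mb i)) ∧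
              ((∀ j, (ω' j).2 = c j) ∧ (∀ i, 𝔟 i (fun j => (ω' j).1 i) = mb i)))
           then Qinvexp p R n c else 0)
    = (if (∀ j, (ω' j).2 = (ω j).2)
        then Qinvexp p R n (fun j => (ω j).2) else 0) *
      ∏ i, (if (fun j => (ω j).1 i) = (fun j => (ω' j).1 i)
        then 1 else ((nbins R n i : ℝ))⁻¹) := by
  -- reorganize each summand's condition
  have hcong : ∀ (𝔟 : ∀ i, (Fin n → M i) → Fin (nbins R n i)) (c : Fin n → C)
      (mb : ∀ i, Fin (nbins R n i)),
      (if (((∀ j, (ω j).2 = c j) ∧ (∀ i, 𝔟 i (fun j => (ω j).1 i) = mb i)) ∧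
          ((∀ j, (ω' j).2 = c j) ∧ (∀ i, 𝔟 i (fun j => (ω' j).1 i) = mb i)))
       then Qinvexp p R n c else 0)
      = (if (((∀ j, (ω j).2 = c j) ∧ (∀ j, (ω' j).2 = c j)) ∧
          ((∀ i, 𝔟 i (fun j => (ω j).1 i) = mb i) ∧
           (∀ i, 𝔟 i (fun j => (ω' j).1 i) = mb i)))
         then Qinvexp p R n c else 0) := by
    intro 𝔟 c mb
    refine if_congr ?_ rfl rfl
    tauto
  simp only [hcong]
  rw [Finset.sum_comm]
  -- now ∑ c, ∑ 𝔟, ∑ mb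
  have hper : ∀ c : Fin n → C,
      (∑ 𝔟 : ∀ i, (Fin n → M i) → Fin (nbins R n i),
        ∑ mb : ∀ i, Fin (nbins R n i),
          (if (((∀ j, (ω j).2 = c j) ∧ (∀ j, (ω' j).2 = c j)) ∧
              ((∀ i, 𝔟 i (fun j => (ω j).1 i) = mb i) ∧
               (∀ i, 𝔟 i (fun j => (ω' j).1 i) = mb i)))
           then Qinvexp p R n c else 0))
      = (if ((∀ j, (ω j).2 = c j) ∧ (∀ j, (ω' j).2 = c j))
          then Qinvexp p R n c *
            (∑ 𝔟 : ∀ i, (Fin n → M i) → Fin (nbins R n i),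
              ∑ mb : ∀ i, Fin (nbins R n i),
                (if ((∀ i, 𝔟 i (fun j => (ω j).1 i) = mb i) ∧
                    (∀ i, 𝔟 i (fun j => (ω' j).1 i) = mb i))
                 then (1:ℝ) else 0))
          else 0) := by
    intro c
    by_cases hc : ((∀ j, (ω j).2 = c j) ∧ (∀ j, (ω' j).2 = c j))
    · rw [if_pos hc, Finset.mul_sum]
      refine Finset.sum_congr rfl fun 𝔟 _ => ?_
      rw [Finset.mul_sum]
      refine Finset.sum_congr rfl fun mb _ => ?_
      by_cases hb : ((∀ i, 𝔟 i (fun j => (ω j).1 i) = mb i) ∧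
          (∀ i, 𝔟 i (fun j => (ω' j).1 i) = mb i))
      · rw [if_pos ⟨hc, hb⟩, if_pos hb, mul_one]
      · rw [if_neg (fun h => hb h.2), if_neg hb, mul_zero]
    · rw [if_neg hc]
      refine Finset.sum_eq_zero fun 𝔟 _ => Finset.sum_eq_zero fun mb _ => ?_
      exact if_neg (fun h => hc h.1)
  simp only [hper]
  -- collapse the c-sum
  rw [c_collapse ω ω' (fun c => Qinvexp p R n c *
    (∑ 𝔟 : ∀ i, (Fin n → M i) → Fin (nbins R n i),
      ∑ mb : ∀ i, Fin (nbins R n i),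
        (if ((∀ i, 𝔟 i (fun j => (ω j).1 i) = mb i) ∧
            (∀ i, 𝔟 i (fun j => (ω' j).1 i) = mb i))
         then (1:ℝ) else 0)))]
  have hbin := bin_avg R n (fun i => fun j => (ω j).1 i) (fun i => fun j => (ω' j).1 i)
  by_cases hC : (∀ j, (ω' j).2 = (ω j).2)
  · rw [if_pos hC, if_pos hC, ← hbin]
    ring
  · rw [if_neg hC, if_neg hC, mul_zero, zero_mul]

lemma kinv_BP (n : ℕ) (ω ω' : Fin n → ((∀ i, M i) × C)) :
    (∏ i, ((nbins R n i : ℝ))⁻¹)⁻¹ *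
      ∏ i, (if (fun j => (ω j).1 i) = (fun j => (ω' j).1 i)
        then 1 else ((nbins R n i : ℝ))⁻¹)
    = ∑ S ∈ (univ : Finset (Fin t)).powerset,
        (if (∀ i ∈ S, (fun j => (ω j).1 i) = (fun j => (ω' j).1 i))
         then ∏ i ∈ S, ((nbins R n i : ℝ) - 1) else 0) := by
  have hk : ∀ i : Fin t, ((nbins R n i : ℝ)) ≠ 0 :=
    fun i => Nat.cast_ne_zero.mpr (nbins_pos R n i).ne'
  rw [Finset.prod_inv_distrib, inv_inv, ← Finset.prod_mul_distrib]
  have h1 : ∀ i : Fin t, (nbins R n i : ℝ) *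
      (if (fun j => (ω j).1 i) = (fun j => (ω' j).1 i)
        then 1 else ((nbins R n i : ℝ))⁻¹)
      = (if (fun j => (ω j).1 i) = (fun j => (ω' j).1 i)
        then (nbins R n i : ℝ) else 1) := by
    intro i
    by_cases h : (fun j => (ω j).1 i) = (fun j => (ω' j).1 i)
    · rw [if_pos h, if_pos h, mul_one]
    · rw [if_neg h, if_neg h, mul_inv_cancel₀ (hk i)]
  rw [Finset.prod_congr rfl fun i _ => h1 i]
  rw [Finset.prod_ite, Finset.prod_const_one, mul_one]
  rw [prod_k_split R n (univ.filter
    (fun i => (fun j => (ω j).1 i) = (fun j => (ω' j).1 i)))]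
  refine Finset.sum_congr rfl fun S _ => ?_
  refine if_congr ?_ rfl rfl
  constructor
  · intro h i hi
    have := h hi
    simpa using this
  · intro h i hi
    simp only [Finset.mem_filter, Finset.mem_univ, true_and]
    exact h i hi

lemma Qinvexp_nonneg (hp0 : ∀ x, 0 ≤ p x) (n : ℕ) (c : Fin n → C) :
    0 ≤ Qinvexp p R n c :=
  inv_nonneg.mpr (mul_nonneg (Finset.prod_nonneg fun j _ => pC_nonneg p hp0 _)
    (Finset.prod_nonneg fun i _ => by positivity))

set_option maxHeartbeats 2000000 in
lemma Dsum_le (hp0 : ∀ x, 0 ≤ p x) (δ : ℝ) (n : ℕ) :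
    (Fintype.card (∀ i, (Fin n → M i) → Fin (nbins R n i)) : ℝ)⁻¹ *
      ∑ 𝔟 : ∀ i, (Fin n → M i) → Fin (nbins R n i),
        ∑ c : Fin n → C, ∑ mb : ∀ i, Fin (nbins R n i),
          (Ptil p R δ n 𝔟 c mb) ^ 2 * (Qideal p R n c mb)⁻¹
    ≤ ∑ S ∈ (univ : Finset (Fin t)).powerset,
        (∏ i ∈ S, ((nbins R n i : ℝ) - 1)) * BS p S δ n := by
  set κv : ℝ := (Fintype.card (∀ i, (Fin n → M i) → Fin (nbins R n i)) : ℝ)⁻¹ with hκv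
  -- Step A+B+C : expand and reorder
  have stepABC :
      κv * ∑ 𝔟 : ∀ i, (Fin n → M i) → Fin (nbins R n i),
        ∑ c : Fin n → C, ∑ mb : ∀ i, Fin (nbins R n i),
          (Ptil p R δ n 𝔟 c mb) ^ 2 * (Qideal p R n c mb)⁻¹
      = ∑ ω : Fin n → ((∀ i, M i) × C), ∑ ω' : Fin n → ((∀ i, M i) × C),
          κv * ∑ 𝔟 : ∀ i, (Fin n → M i) → Fin (nbins R n i),
            ∑ c : Fin n → C, ∑ mb : ∀ i, Fin (nbins R n i),
              (if (Typ p δ ω ∧ Typ p δ ω') ∧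
                  (((∀ j, (ω j).2 = c j) ∧ (∀ i, 𝔟 i (fun j => (ω j).1 i) = mb i)) ∧
                   ((∀ j, (ω' j).2 = c j) ∧ (∀ i, 𝔟 i (fun j => (ω' j).1 i) = mb i)))
               then (pn p ω * pn p ω') * Qinvexp p R n c else 0) := by
    rw [Finset.sum_congr rfl fun 𝔟 _ => Finset.sum_congr rfl fun c _ =>
      Finset.sum_congr rfl fun mb _ => Ptil_sq_expand p R δ n 𝔟 c mb]
    rw [Finset.sum_congr rfl fun 𝔟 _ => sum_comm4 _]
    rw [sum_comm3 (fun (𝔟 : ∀ i, (Fin n → M i) → Fin (nbins R n i))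
      (ω ω' : Fin n → ((∀ i, M i) × C)) => _)]
    rw [Finset.sum_comm]
    rw [Finset.mul_sum]
    refine Finset.sum_congr rfl fun ω _ => ?_
    rw [Finset.mul_sum]
  rw [stepABC]
  -- Step D : per (ω, ω') compute the inner average
  have stepD : ∀ ω ω' : Fin n → ((∀ i, M i) × C),
      κv * ∑ 𝔟 : ∀ i, (Fin n → M i) → Fin (nbins R n i),
        ∑ c : Fin n → C, ∑ mb : ∀ i, Fin (nbins R n i),
          (if (Typ p δ ω ∧ Typ p δ ω') ∧
              (((∀ j, (ω j).2 = c j) ∧ (∀ i, 𝔟 i (fun j => (ω j).1 i) = mb i)) ∧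
               ((∀ j, (ω' j).2 = c j) ∧ (∀ i, 𝔟 i (fun j => (ω' j).1 i) = mb i)))
           then (pn p ω * pn p ω') * Qinvexp p R n c else 0)
      = if Typ p δ ω ∧ Typ p δ ω' then
          (pn p ω * pn p ω') *
            ((if (∀ j, (ω' j).2 = (ω j).2)
              then Qinvexp p R n (fun j => (ω j).2) else 0) *
             ∏ i, (if (fun j => (ω j).1 i) = (fun j => (ω' j).1 i)
               then 1 else ((nbins R n i : ℝ))⁻¹))
        else 0 := by
    intro ω ω'
    by_cases hT : Typ p δ ω ∧ Typ p δ ω'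
    · rw [if_pos hT]
      have hstep : ∀ (𝔟 : ∀ i, (Fin n → M i) → Fin (nbins R n i)) (c : Fin n → C)
          (mb : ∀ i, Fin (nbins R n i)),
          (if (Typ p δ ω ∧ Typ p δ ω') ∧
              (((∀ j, (ω j).2 = c j) ∧ (∀ i, 𝔟 i (fun j => (ω j).1 i) = mb i)) ∧
               ((∀ j, (ω' j).2 = c j) ∧ (∀ i, 𝔟 i (fun j => (ω' j).1 i) = mb i)))
           then (pn p ω * pn p ω') * Qinvexp p R n c else 0)
          = (pn p ω * pn p ω') *
            (if (((∀ j, (ω j).2 = c j) ∧ (∀ i, 𝔟 i (fun j => (ω j).1 i) = mb i)) ∧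
               ((∀ j, (ω' j).2 = c j) ∧ (∀ i, 𝔟 i (fun j => (ω' j).1 i) = mb i)))
             then Qinvexp p R n c else 0) := by
        intro 𝔟 c mb
        by_cases hR : (((∀ j, (ω j).2 = c j) ∧ (∀ i, 𝔟 i (fun j => (ω j).1 i) = mb i)) ∧
            ((∀ j, (ω' j).2 = c j) ∧ (∀ i, 𝔟 i (fun j => (ω' j).1 i) = mb i)))
        · rw [if_pos ⟨hT, hR⟩, if_pos hR]
        · rw [if_neg (fun h => hR h.2), if_neg hR, mul_zero]
      simp only [hstep]
      simp only [← Finset.mul_sum]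
      rw [show ∀ a b c : ℝ, a * (b * c) = b * (a * c) from fun a b c => by ring]
      rw [inner_avg p R n ω ω']
    · rw [if_neg hT]
      rw [Finset.sum_eq_zero fun 𝔟 _ => Finset.sum_eq_zero fun c _ =>
        Finset.sum_eq_zero fun mb _ => if_neg (fun h => hT h.1), mul_zero]
  rw [Finset.sum_congr rfl fun ω _ => Finset.sum_congr rfl fun ω' _ => stepD ω ω']
  -- Step E : drop the typicality condition on ω'
  have stepE : ∀ ω ω' : Fin n → ((∀ i, M i) × C),
      (if Typ p δ ω ∧ Typ p δ ω' then
          (pn p ω * pn p ω') *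
            ((if (∀ j, (ω' j).2 = (ω j).2)
              then Qinvexp p R n (fun j => (ω j).2) else 0) *
             ∏ i, (if (fun j => (ω j).1 i) = (fun j => (ω' j).1 i)
               then 1 else ((nbins R n i : ℝ))⁻¹))
        else 0)
      ≤ (if Typ p δ ω then
          (pn p ω * pn p ω') *
            ((if (∀ j, (ω' j).2 = (ω j).2)
              then Qinvexp p R n (fun j => (ω j).2) else 0) *
             ∏ i, (if (fun j => (ω j).1 i) = (fun j => (ω' j).1 i)
               then 1 else ((nbins R n i : ℝ))⁻¹))
        else 0) := by
    intro ω ω'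
    have hv : 0 ≤ (pn p ω * pn p ω') *
        ((if (∀ j, (ω' j).2 = (ω j).2)
          then Qinvexp p R n (fun j => (ω j).2) else 0) *
         ∏ i, (if (fun j => (ω j).1 i) = (fun j => (ω' j).1 i)
           then 1 else ((nbins R n i : ℝ))⁻¹)) := by
      refine mul_nonneg (mul_nonneg (pn_nonneg p hp0 ω) (pn_nonneg p hp0 ω'))
        (mul_nonneg ?_ (Finset.prod_nonneg fun i _ => ?_))
      · split
        · exact Qinvexp_nonneg p R hp0 n _
        · exact le_rfl
      · split
        · exact zero_le_one
        · positivity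
    by_cases hT : Typ p δ ω ∧ Typ p δ ω'
    · rw [if_pos hT, if_pos hT.1]
    · rw [if_neg hT]
      split
      · exact hv
      · exact le_rfl
  refine (Finset.sum_le_sum fun ω _ => Finset.sum_le_sum fun ω' _ =>
    stepE ω ω').trans ?_
  -- Step F : split over subsets S
  have stepF : ∀ ω ω' : Fin n → ((∀ i, M i) × C),
      (if Typ p δ ω then
          (pn p ω * pn p ω') *
            ((if (∀ j, (ω' j).2 = (ω j).2)
              then Qinvexp p R n (fun j => (ω j).2) else 0) *
             ∏ i, (if (fun j => (ω j).1 i) = (fun j => (ω' j).1 i)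
               then 1 else ((nbins R n i : ℝ))⁻¹))
        else 0)
      = ∑ S ∈ (univ : Finset (Fin t)).powerset,
          (∏ i ∈ S, ((nbins R n i : ℝ) - 1)) *
            (if Typ p δ ω then
              pn p ω * ((∏ j, pC p ((ω j).2))⁻¹ *
                (if ((∀ j, (ω' j).2 = (ω j).2) ∧
                    (∀ i ∈ S, (fun j => (ω j).1 i) = (fun j => (ω' j).1 i)))
                 then pn p ω' else 0))
            else 0) := by
    intro ω ω'
    by_cases hT : Typ p δ ω
    case neg =>
      rw [if_neg hT]
      rw [Finset.sum_eq_zero fun S _ => ?_]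
      rw [if_neg hT, mul_zero]
    case pos =>
    rw [if_pos hT]
    simp only [if_pos hT]
    by_cases hC : (∀ j, (ω' j).2 = (ω j).2)
    case neg =>
      rw [if_neg hC, zero_mul, mul_zero]
      rw [Finset.sum_eq_zero fun S _ => ?_]
      rw [if_neg (fun h => hC h.1), mul_zero, mul_zero, mul_zero]
    case pos =>
    rw [if_pos hC]
    have hexp : Qinvexp p R n (fun j => (ω j).2) *
        ∏ i, (if (fun j => (ω j).1 i) = (fun j => (ω' j).1 i)
          then 1 else ((nbins R n i : ℝ))⁻¹)
        = (∏ j, pC p ((ω j).2))⁻¹ *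
          ∑ S ∈ (univ : Finset (Fin t)).powerset,
            (if (∀ i ∈ S, (fun j => (ω j).1 i) = (fun j => (ω' j).1 i))
             then ∏ i ∈ S, ((nbins R n i : ℝ) - 1) else 0) := by
      rw [Qinvexp, mul_inv, mul_assoc, kinv_BP R n ω ω']
    rw [hexp]
    rw [Finset.mul_sum, Finset.mul_sum]
    refine Finset.sum_congr rfl fun S _ => ?_
    by_cases hS : (∀ i ∈ S, (fun j => (ω j).1 i) = (fun j => (ω' j).1 i))
    · rw [if_pos hS, if_pos ⟨hC, hS⟩]
      ring
    · rw [if_neg hS, if_neg (fun h => hS h.2)]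
      ring
  rw [Finset.sum_congr rfl fun ω _ => Finset.sum_congr rfl fun ω' _ => stepF ω ω']
  -- Step G : reorder the sums to put S outermost
  rw [Finset.sum_congr rfl fun ω (_ : ω ∈ univ) => Finset.sum_comm]
  rw [Finset.sum_comm]
  -- Step H : per S identify BS
  refine le_of_eq (Finset.sum_congr rfl fun S _ => ?_)
  rw [BS, Finset.mul_sum]
  refine Finset.sum_congr rfl fun ω _ => ?_
  rw [← Finset.mul_sum]
  congr 1
  by_cases hT : Typ p δ ω
  case neg => simp only [if_neg hT, Finset.sum_const_zero]
  case pos =>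
  simp only [if_pos hT]
  simp only [← Finset.mul_sum]
  rw [sum_match_S p S ω]

lemma tau_le_one (hp0 : ∀ x, 0 ≤ p x) (hp1 : ∑ x, p x = 1) (δ : ℝ) (n : ℕ) :
    tau p δ n ≤ 1 := by
  have h := tau_add_eps p hp1 δ n
  linarith [eps_nonneg p hp0 δ n]

lemma BS_empty_le (hp0 : ∀ x, 0 ≤ p x) (δ : ℝ) (n : ℕ) :
    BS p (∅ : Finset (Fin t)) δ n ≤ tau p δ n := by
  unfold BS tau
  refine Finset.sum_le_sum fun ω _ => ?_
  by_cases hT : Typ p δ ω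
  · rw [if_pos hT, if_pos hT]
    have hq : (∏ j, pC p ((ω j).2))⁻¹ *
        ∏ j, pSC p ∅ (fun i => (ω j).1 i.1) ((ω j).2) ≤ 1 := by
      rw [Finset.prod_congr rfl fun j (_ : j ∈ univ) => pSC_empty p _ ((ω j).2)]
      by_cases h : (∏ j, pC p ((ω j).2)) = 0
      · rw [h, mul_zero]
        exact zero_le_one
      · rw [inv_mul_cancel₀ h]
    calc pn p ω * ((∏ j, pC p ((ω j).2))⁻¹ *
          ∏ j, pSC p ∅ (fun i => (ω j).1 i.1) ((ω j).2))
        ≤ pn p ω * 1 := mul_le_mul_of_nonneg_left hq (pn_nonneg p hp0 ω)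
      _ = pn p ω := mul_one _
  · rw [if_neg hT, if_neg hT]

lemma BS_le (hp0 : ∀ x, 0 ≤ p x) (hp1 : ∑ x, p x = 1) (S : Finset (Fin t))
    (hS : S.Nonempty) (δ : ℝ) (n : ℕ) :
    BS p S δ n ≤ (2:ℝ) ^ (-((n:ℝ) * (condEnt p S - δ))) := by
  set E : ℝ := (2:ℝ) ^ (-((n:ℝ) * (condEnt p S - δ))) with hE
  have hE0 : 0 ≤ E := Real.rpow_nonneg (by norm_num) _
  have step : ∀ ω : Fin n → ((∀ i, M i) × C),
      (if Typ p δ ω then pn p ω * ((∏ j, pC p ((ω j).2))⁻¹ *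
          ∏ j, pSC p S (fun i => (ω j).1 i.1) ((ω j).2)) else 0)
      ≤ (if Typ p δ ω then pn p ω else 0) * E := by
    intro ω
    by_cases hT : Typ p δ ω
    case neg => rw [if_neg hT, if_neg hT, zero_mul]
    case pos =>
    rw [if_pos hT, if_pos hT]
    by_cases hz : ∀ j, 0 < p (ω j)
    case neg =>
      push_neg at hz
      obtain ⟨j0, hj0⟩ := hz
      have h0 : p (ω j0) = 0 := le_antisymm hj0 (hp0 _)
      have hpn : pn p ω = 0 := Finset.prod_eq_zero (Finset.mem_univ j0) h0
      rw [hpn, zero_mul, zero_mul]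
    case pos =>
    refine mul_le_mul_of_nonneg_left ?_ (pn_nonneg p hp0 ω)
    have hpC : ∀ j, 0 < pC p ((ω j).2) :=
      fun j => lt_of_lt_of_le (hz j) (p_le_pC p hp0 (ω j))
    have hpSC : ∀ j, 0 < pSC p S (fun i => (ω j).1 i.1) ((ω j).2) :=
      fun j => lt_of_lt_of_le (hz j) (p_le_pSC p hp0 S (ω j))
    have hratio : ∀ j : Fin n, (pC p ((ω j).2))⁻¹ *
        pSC p S (fun i => (ω j).1 i.1) ((ω j).2) = (2:ℝ) ^ (- wt p S (ω j)) := by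
      intro j
      rw [wt, neg_neg, Real.rpow_logb two_pos (by norm_num)
        (div_pos (hpSC j) (hpC j))]
      rw [div_eq_mul_inv]
      ring
    rw [← Finset.prod_inv_distrib, ← Finset.prod_mul_distrib]
    rw [Finset.prod_congr rfl fun j (_ : j ∈ univ) => hratio j]
    rw [← rpow_sum]
    rw [hE]
    refine Real.rpow_le_rpow_of_exponent_le one_le_two ?_
    have h3 : ∑ j : Fin n, - wt p S (ω j) = - ∑ j : Fin n, wt p S (ω j) := by
      rw [Finset.sum_neg_distrib]
    have h2 := hT S hS
    rw [h3]
    linarith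
  calc BS p S δ n ≤ ∑ ω : Fin n → ((∀ i, M i) × C),
        (if Typ p δ ω then pn p ω else 0) * E := Finset.sum_le_sum fun ω _ => step ω
    _ = tau p δ n * E := by rw [← Finset.sum_mul]; rfl
    _ ≤ 1 * E := mul_le_mul_of_nonneg_right (tau_le_one p hp0 hp1 δ n) hE0
    _ = E := one_mul _

lemma eps_le_union (hp0 : ∀ x, 0 ≤ p x) (δ : ℝ) (n : ℕ) :
    eps p δ n ≤ ∑ S ∈ (univ : Finset (Fin t)).powerset.filter (fun S => S.Nonempty),
      ∑ ω ∈ univ.filter (fun ω : Fin n → ((∀ i, M i) × C) =>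
        ∑ j, wt p S (ω j) < (n:ℝ) * (condEnt p S - δ)), pn p ω := by
  unfold eps
  have hpt : ∀ ω : Fin n → ((∀ i, M i) × C),
      (if ¬ Typ p δ ω then pn p ω else 0)
      ≤ ∑ S ∈ (univ : Finset (Fin t)).powerset.filter (fun S => S.Nonempty),
          (if ∑ j, wt p S (ω j) < (n:ℝ) * (condEnt p S - δ) then pn p ω else 0) := by
    intro ω
    by_cases hT : Typ p δ ω
    · rw [if_neg (fun h => h hT)]
      exact Finset.sum_nonneg fun S _ => by
        split
        · exact pn_nonneg p hp0 ω
        · exact le_rfl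
    · rw [if_pos hT]
      unfold Typ at hT
      push_neg at hT
      obtain ⟨S0, hS0ne, hS0⟩ := hT
      have hmem : S0 ∈ (univ : Finset (Fin t)).powerset.filter (fun S => S.Nonempty) := by
        simp [Finset.mem_filter, Finset.mem_powerset, hS0ne]
      have hbound := Finset.single_le_sum
        (f := fun S => if ∑ j, wt p S (ω j) < (n:ℝ) * (condEnt p S - δ)
          then pn p ω else 0)
        (fun S _ => by
          split
          · exact pn_nonneg p hp0 ω
          · exact le_rfl) hmem
      have hbound' : (if ∑ j, wt p S0 (ω j) < (n:ℝ) * (condEnt p S0 - δ)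
          then pn p ω else 0)
          ≤ ∑ S ∈ (univ : Finset (Fin t)).powerset.filter (fun S => S.Nonempty),
            (if ∑ j, wt p S (ω j) < (n:ℝ) * (condEnt p S - δ) then pn p ω else 0) :=
        hbound
      rwa [if_pos hS0] at hbound'
  calc ∑ ω : Fin n → ((∀ i, M i) × C), (if ¬ Typ p δ ω then pn p ω else 0)
      ≤ ∑ ω : Fin n → ((∀ i, M i) × C),
          ∑ S ∈ (univ : Finset (Fin t)).powerset.filter (fun S => S.Nonempty),
            (if ∑ j, wt p S (ω j) < (n:ℝ) * (condEnt p S - δ) then pn p ω else 0) :=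
        Finset.sum_le_sum fun ω _ => hpt ω
    _ = ∑ S ∈ (univ : Finset (Fin t)).powerset.filter (fun S => S.Nonempty),
          ∑ ω : Fin n → ((∀ i, M i) × C),
            (if ∑ j, wt p S (ω j) < (n:ℝ) * (condEnt p S - δ) then pn p ω else 0) :=
        Finset.sum_comm
    _ = _ := Finset.sum_congr rfl fun S _ => (Finset.sum_filter _ _).symm

lemma Phat_nonneg (hp0 : ∀ x, 0 ≤ p x) (δ : ℝ) (n : ℕ)
    (𝔟 : ∀ i, (Fin n → M i) → Fin (nbins R n i)) (c : Fin n → C)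
    (mb : ∀ i, Fin (nbins R n i)) : 0 ≤ Phat p R δ n 𝔟 c mb :=
  Finset.sum_nonneg fun ω _ => by
    split
    · exact pn_nonneg p hp0 ω
    · exact le_rfl

lemma BS_nonneg (hp0 : ∀ x, 0 ≤ p x) (S : Finset (Fin t)) (δ : ℝ) (n : ℕ) :
    0 ≤ BS p S δ n :=
  Finset.sum_nonneg fun ω _ => by
    split
    · refine mul_nonneg (pn_nonneg p hp0 ω) (mul_nonneg ?_ ?_)
      · exact inv_nonneg.mpr (Finset.prod_nonneg fun j _ => pC_nonneg p hp0 _)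
      · exact Finset.prod_nonneg fun j _ => pSC_nonneg p hp0 S _ _
    · exact le_rfl

lemma Vsum_nonneg (hp0 : ∀ x, 0 ≤ p x) (δ : ℝ) (n : ℕ)
    (𝔟 : ∀ i, (Fin n → M i) → Fin (nbins R n i)) :
    0 ≤ ∑ c : Fin n → C, ∑ mb : ∀ i, Fin (nbins R n i),
      (Ptil p R δ n 𝔟 c mb - Qideal p R n c mb) ^ 2 * (Qideal p R n c mb)⁻¹ :=
  Finset.sum_nonneg fun c _ => Finset.sum_nonneg fun mb _ =>
    mul_nonneg (sq_nonneg _) (inv_nonneg.mpr (Qideal_nonneg p R hp0 n c mb))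

end Aux

set_option linter.unusedSectionVars false in
set_option maxHeartbeats 2000000 in
/-- **Exponentially fast OSRB.** If `∑_{i∈S} Rᵢ < H(M_S | C)` for every nonempty
`S ⊆ [t]`, then the expected total variation distance between the induced pmf of
`(C([n]), M̄₁, …, M̄_t)` and the ideal pmf is eventually at most `2^{−κn}` for some
constant `κ > 0`. -/
theorem osrb_exponential (p : ((∀ i, M i) × C) → ℝ)
    (hp0 : ∀ x, 0 ≤ p x) (hp1 : ∑ x, p x = 1)
    (R : Fin t → ℝ) (hR : ∀ i, 0 < R i)
    (hrate : ∀ S : Finset (Fin t), S.Nonempty → ∑ i ∈ S, R i < condEnt p S) :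
    ∃ κ : ℝ, 0 < κ ∧ ∃ N : ℕ, ∀ n ≥ N, Ebin p R n ≤ (2 : ℝ) ^ (-(κ * (n : ℝ))) := by
  classical
  have hpow : ((univ : Finset (Fin t)).powerset).Nonempty := ⟨∅, by simp⟩
  -- the typicality slack δ
  set G : Finset (Fin t) → ℝ :=
    fun S => if S.Nonempty then (condEnt p S - ∑ i ∈ S, R i) / 2 else 1 with hG
  set δ : ℝ := (univ : Finset (Fin t)).powerset.inf' hpow G with hδdef
  have hδpos : 0 < δ := by
    rw [hδdef, Finset.lt_inf'_iff]
    intro S _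
    rw [hG]
    dsimp only
    by_cases h : S.Nonempty
    · rw [if_pos h]
      linarith [hrate S h]
    · rw [if_neg h]
      norm_num
  have hδS : ∀ S : Finset (Fin t), S.Nonempty → δ + δ ≤ condEnt p S - ∑ i ∈ S, R i := by
    intro S hS
    have h1 : δ ≤ G S := by
      rw [hδdef]
      exact Finset.inf'_le G (by simp)
    rw [hG] at h1
    dsimp only at h1
    rw [if_pos hS] at h1
    linarith
  -- Chernoff exponents for each subset
  have hch : ∀ S : Finset (Fin t), ∃ ρ : ℝ, 0 < ρ ∧ ρ < 1 ∧ (S.Nonempty →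
      ∀ (n : ℕ) (T : Finset (Fin n → ((∀ i, M i) × C))),
        (∀ ω ∈ T, ∑ j, wt p S (ω j) < (n:ℝ) * (condEnt p S - δ)) →
        ∑ ω ∈ T, ∏ j, p (ω j) ≤ ρ ^ n) := by
    intro S
    by_cases hS : S.Nonempty
    · have hmean : condEnt p S - δ < ∑ x, p x * wt p S x := by
        rw [← condEnt_eq_sum]
        linarith
      obtain ⟨ρ, h0, h1, h2⟩ := chernoff p hp0 hp1 (wt p S) (condEnt p S - δ) hmean
      exact ⟨ρ, h0, h1, fun _ => h2⟩
    · exact ⟨1/2, by norm_num, by norm_num, fun h => absurd h hS⟩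
  choose ρ hρ0 hρ1 hρch using hch
  set σ : ℝ := max ((univ : Finset (Fin t)).powerset.sup' hpow ρ) ((2:ℝ) ^ (-δ)) with hσdef
  have hσ0 : 0 < σ := lt_of_lt_of_le (Real.rpow_pos_of_pos two_pos _) (le_max_right _ _)
  have hσ1 : σ < 1 := by
    rw [hσdef]
    refine max_lt ?_ ?_
    · rw [Finset.sup'_lt_iff]
      exact fun S _ => hρ1 S
    · exact Real.rpow_lt_one_of_one_lt_of_neg one_lt_two (neg_lt_zero.mpr hδpos)
  have hρσ : ∀ S : Finset (Fin t), ρ S ≤ σ := fun S =>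
    le_trans (Finset.le_sup' ρ (by simp : S ∈ (univ : Finset (Fin t)).powerset))
      (le_max_left _ _)
  have h2δσ : (2:ℝ) ^ (-δ) ≤ σ := le_max_right _ _
  have hσn0 : ∀ n : ℕ, (0:ℝ) ≤ σ ^ n := fun n => pow_nonneg hσ0.le n
  set A : ℝ := (2:ℝ) ^ t with hA
  have hA0 : 0 < A := by positivity
  have hcard2t : ∀ s : Finset (Finset (Fin t)),
      s ⊆ (univ : Finset (Fin t)).powerset → (s.card : ℝ) ≤ A := by
    intro s hs
    have h1 : s.card ≤ ((univ : Finset (Fin t)).powerset).card :=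
      Finset.card_le_card hs
    rw [Finset.card_powerset, Finset.card_univ, Fintype.card_fin] at h1
    rw [hA]
    exact_mod_cast h1
  -- atypicality bound
  have hEps : ∀ n : ℕ, eps p δ n ≤ A * σ ^ n := by
    intro n
    refine (eps_le_union p hp0 δ n).trans ?_
    have hterm : ∀ S ∈ (univ : Finset (Fin t)).powerset.filter (fun S => S.Nonempty),
        (∑ ω ∈ univ.filter (fun ω : Fin n → ((∀ i, M i) × C) =>
          ∑ j, wt p S (ω j) < (n:ℝ) * (condEnt p S - δ)), pn p ω) ≤ σ ^ n := by
      intro S hSm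
      have hSne : S.Nonempty := (Finset.mem_filter.mp hSm).2
      have h1 := hρch S hSne n
        (univ.filter (fun ω : Fin n → ((∀ i, M i) × C) =>
          ∑ j, wt p S (ω j) < (n:ℝ) * (condEnt p S - δ)))
        (fun ω hω => (Finset.mem_filter.mp hω).2)
      have h2 : (∑ ω ∈ univ.filter (fun ω : Fin n → ((∀ i, M i) × C) =>
          ∑ j, wt p S (ω j) < (n:ℝ) * (condEnt p S - δ)), pn p ω) ≤ ρ S ^ n := h1
      exact h2.trans (pow_le_pow_left₀ (hρ0 S).le (hρσ S) n)
    calc ∑ S ∈ (univ : Finset (Fin t)).powerset.filter (fun S => S.Nonempty),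
          ∑ ω ∈ univ.filter (fun ω : Fin n → ((∀ i, M i) × C) =>
            ∑ j, wt p S (ω j) < (n:ℝ) * (condEnt p S - δ)), pn p ω
        ≤ ∑ _S ∈ (univ : Finset (Fin t)).powerset.filter (fun S => S.Nonempty),
            σ ^ n := Finset.sum_le_sum hterm
      _ = (((univ : Finset (Fin t)).powerset.filter
            (fun S => S.Nonempty)).card : ℝ) * σ ^ n := by
          rw [Finset.sum_const, nsmul_eq_mul]
      _ ≤ A * σ ^ n := by
          refine mul_le_mul_of_nonneg_right
            (hcard2t _ (Finset.filter_subset _ _)) (hσn0 n)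
  -- collision bound
  have hK : ∀ n : ℕ, ∑ S ∈ ((univ : Finset (Fin t)).powerset).erase ∅,
      (∏ i ∈ S, ((nbins R n i : ℝ) - 1)) * BS p S δ n ≤ A * σ ^ n := by
    intro n
    have hterm : ∀ S ∈ ((univ : Finset (Fin t)).powerset).erase ∅,
        (∏ i ∈ S, ((nbins R n i : ℝ) - 1)) * BS p S δ n ≤ σ ^ n := by
      intro S hSm
      have hSne : S.Nonempty :=
        Finset.nonempty_iff_ne_empty.mpr (Finset.mem_erase.mp hSm).1
      have hkb : ∏ i ∈ S, ((nbins R n i : ℝ) - 1)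
          ≤ (2:ℝ) ^ ((n:ℝ) * ∑ i ∈ S, R i) := by
        have h1 : ∀ i ∈ S, (nbins R n i : ℝ) - 1 ≤ (2:ℝ) ^ ((n:ℝ) * R i) := by
          intro i _
          have h2 := Nat.ceil_lt_add_one
            (le_of_lt (Real.rpow_pos_of_pos two_pos ((n:ℝ) * R i)))
          have h3 : (nbins R n i : ℝ) < (2:ℝ) ^ ((n:ℝ) * R i) + 1 := h2
          linarith
        calc ∏ i ∈ S, ((nbins R n i : ℝ) - 1)
            ≤ ∏ i ∈ S, (2:ℝ) ^ ((n:ℝ) * R i) := by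
              refine Finset.prod_le_prod (fun i _ => ?_) h1
              have h4 : (1:ℝ) ≤ (nbins R n i : ℝ) :=
                Nat.one_le_cast.mpr (nbins_pos R n i)
              linarith
          _ = (2:ℝ) ^ (∑ i ∈ S, (n:ℝ) * R i) := (rpow_sum S _).symm
          _ = (2:ℝ) ^ ((n:ℝ) * ∑ i ∈ S, R i) := by rw [← Finset.mul_sum]
      have hBS := BS_le p hp0 hp1 S hSne δ n
      calc (∏ i ∈ S, ((nbins R n i : ℝ) - 1)) * BS p S δ n
          ≤ (2:ℝ) ^ ((n:ℝ) * ∑ i ∈ S, R i) *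
              (2:ℝ) ^ (-((n:ℝ) * (condEnt p S - δ))) := by
            refine mul_le_mul hkb hBS (BS_nonneg p hp0 S δ n) ?_
            positivity
        _ = (2:ℝ) ^ ((n:ℝ) * ∑ i ∈ S, R i + -((n:ℝ) * (condEnt p S - δ))) := by
            rw [← Real.rpow_add two_pos]
        _ ≤ (2:ℝ) ^ (-((n:ℝ) * δ)) := by
            refine Real.rpow_le_rpow_of_exponent_le one_le_two ?_
            have hgap := hδS S hSne
            have hn0 : (0:ℝ) ≤ (n:ℝ) := Nat.cast_nonneg n
            nlinarith
        _ = ((2:ℝ) ^ (-δ)) ^ n := by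
            rw [← Real.rpow_natCast ((2:ℝ) ^ (-δ)) n, ← Real.rpow_mul two_pos.le]
            congr 1
            ring
        _ ≤ σ ^ n := pow_le_pow_left₀ (Real.rpow_nonneg two_pos.le _) h2δσ n
    calc ∑ S ∈ ((univ : Finset (Fin t)).powerset).erase ∅,
          (∏ i ∈ S, ((nbins R n i : ℝ) - 1)) * BS p S δ n
        ≤ ∑ _S ∈ ((univ : Finset (Fin t)).powerset).erase ∅, σ ^ n :=
          Finset.sum_le_sum hterm
      _ = ((((univ : Finset (Fin t)).powerset).erase ∅).card : ℝ) * σ ^ n := by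
          rw [Finset.sum_const, nsmul_eq_mul]
      _ ≤ A * σ ^ n :=
          mul_le_mul_of_nonneg_right
            (hcard2t _ (Finset.erase_subset _ _)) (hσn0 n)
  -- main chain for each n
  have hmain : ∀ n : ℕ, Ebin p R n
      ≤ 2⁻¹ * (A * σ ^ n + Real.sqrt (2 * (A * σ ^ n))) := by
    intro n
    have hcardpos : (0:ℝ) <
        (Fintype.card (∀ i, (Fin n → M i) → Fin (nbins R n i)) : ℝ) := by
      exact_mod_cast card_binnings_pos R n
    set cinv : ℝ :=
      (Fintype.card (∀ i, (Fin n → M i) → Fin (nbins R n i)) : ℝ)⁻¹ with hcinv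
    have hcinv0 : 0 ≤ cinv := inv_nonneg.mpr hcardpos.le
    have hc1 : cinv * (Fintype.card (∀ i, (Fin n → M i) → Fin (nbins R n i)) : ℝ) = 1 :=
      inv_mul_cancel₀ hcardpos.ne'
    -- per-binning bound
    have hTV : ∀ 𝔟 : ∀ i, (Fin n → M i) → Fin (nbins R n i),
        ∑ c : Fin n → C, ∑ mb : ∀ i, Fin (nbins R n i),
          |Pind p R n 𝔟 c mb - Qideal p R n c mb|
        ≤ Real.sqrt (∑ c : Fin n → C, ∑ mb : ∀ i, Fin (nbins R n i),
            (Ptil p R δ n 𝔟 c mb - Qideal p R n c mb) ^ 2 * (Qideal p R n c mb)⁻¹)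
          + eps p δ n := by
      intro 𝔟
      have hsplit : ∑ c : Fin n → C, ∑ mb : ∀ i, Fin (nbins R n i),
          |Pind p R n 𝔟 c mb - Qideal p R n c mb|
          ≤ (∑ c : Fin n → C, ∑ mb : ∀ i, Fin (nbins R n i),
              |Ptil p R δ n 𝔟 c mb - Qideal p R n c mb|) + eps p δ n := by
        rw [← sum_Phat p R δ n 𝔟, ← Finset.sum_add_distrib]
        refine Finset.sum_le_sum fun c _ => ?_
        rw [← Finset.sum_add_distrib]
        refine Finset.sum_le_sum fun mb _ => ?_
        rw [Pind_split p R δ n 𝔟 c mb]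
        calc |Ptil p R δ n 𝔟 c mb + Phat p R δ n 𝔟 c mb - Qideal p R n c mb|
            = |(Ptil p R δ n 𝔟 c mb - Qideal p R n c mb) + Phat p R δ n 𝔟 c mb| := by
              ring_nf
          _ ≤ |Ptil p R δ n 𝔟 c mb - Qideal p R n c mb| + |Phat p R δ n 𝔟 c mb| :=
              abs_add_le _ _
          _ = |Ptil p R δ n 𝔟 c mb - Qideal p R n c mb| + Phat p R δ n 𝔟 c mb := by
              rw [abs_of_nonneg (Phat_nonneg p R hp0 δ n 𝔟 c mb)]
      exact hsplit.trans (add_le_add_left (tv_le_sqrt p R hp0 hp1 δ n 𝔟) _)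
    -- average the per-binning bound
    have havg : Ebin p R n ≤ 2⁻¹ * ((cinv *
        ∑ 𝔟 : ∀ i, (Fin n → M i) → Fin (nbins R n i),
          Real.sqrt (∑ c : Fin n → C, ∑ mb : ∀ i, Fin (nbins R n i),
            (Ptil p R δ n 𝔟 c mb - Qideal p R n c mb) ^ 2 * (Qideal p R n c mb)⁻¹))
          + eps p δ n) := by
      have e0 : Ebin p R n = cinv *
          ∑ 𝔟 : ∀ i, (Fin n → M i) → Fin (nbins R n i),
            2⁻¹ * ∑ c : Fin n → C, ∑ mb : ∀ i, Fin (nbins R n i),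
              |Pind p R n 𝔟 c mb - Qideal p R n c mb| := by
        rw [Ebin, hcinv]
      rw [e0]
      have e1 : ∀ 𝔟 : ∀ i, (Fin n → M i) → Fin (nbins R n i),
          2⁻¹ * ∑ c : Fin n → C, ∑ mb : ∀ i, Fin (nbins R n i),
            |Pind p R n 𝔟 c mb - Qideal p R n c mb|
          ≤ 2⁻¹ * (Real.sqrt (∑ c : Fin n → C, ∑ mb : ∀ i, Fin (nbins R n i),
              (Ptil p R δ n 𝔟 c mb - Qideal p R n c mb) ^ 2 * (Qideal p R n c mb)⁻¹)
            + eps p δ n) := fun 𝔟 =>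
        mul_le_mul_of_nonneg_left (hTV 𝔟) (by norm_num)
      refine le_trans (mul_le_mul_of_nonneg_left
        (Finset.sum_le_sum fun 𝔟 _ => e1 𝔟) hcinv0) ?_
      have e2 : ∑ 𝔟 : ∀ i, (Fin n → M i) → Fin (nbins R n i),
          2⁻¹ * (Real.sqrt (∑ c : Fin n → C, ∑ mb : ∀ i, Fin (nbins R n i),
              (Ptil p R δ n 𝔟 c mb - Qideal p R n c mb) ^ 2 * (Qideal p R n c mb)⁻¹)
            + eps p δ n)
          = 2⁻¹ * ((∑ 𝔟 : ∀ i, (Fin n → M i) → Fin (nbins R n i),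
              Real.sqrt (∑ c : Fin n → C, ∑ mb : ∀ i, Fin (nbins R n i),
                (Ptil p R δ n 𝔟 c mb - Qideal p R n c mb) ^ 2 *
                  (Qideal p R n c mb)⁻¹))
            + (Fintype.card (∀ i, (Fin n → M i) → Fin (nbins R n i)) : ℝ) *
                eps p δ n) := by
        rw [← Finset.mul_sum, Finset.sum_add_distrib, Finset.sum_const, card_univ,
          nsmul_eq_mul]
      rw [e2]
      rw [show ∀ a b : ℝ, cinv * (2⁻¹ * (a + (Fintype.card (∀ i, (Fin n → M i) →
          Fin (nbins R n i)) : ℝ) * b))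
          = 2⁻¹ * (cinv * a + (cinv * (Fintype.card (∀ i, (Fin n → M i) →
              Fin (nbins R n i)) : ℝ)) * b) from fun a b => by ring]
      rw [hc1, one_mul]
    -- bound the average of sqrt by Jensen and the collision bound
    have hjen : cinv * ∑ 𝔟 : ∀ i, (Fin n → M i) → Fin (nbins R n i),
        Real.sqrt (∑ c : Fin n → C, ∑ mb : ∀ i, Fin (nbins R n i),
          (Ptil p R δ n 𝔟 c mb - Qideal p R n c mb) ^ 2 * (Qideal p R n c mb)⁻¹)
        ≤ Real.sqrt (cinv * ∑ 𝔟 : ∀ i, (Fin n → M i) → Fin (nbins R n i),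
            ∑ c : Fin n → C, ∑ mb : ∀ i, Fin (nbins R n i),
              (Ptil p R δ n 𝔟 c mb - Qideal p R n c mb) ^ 2 * (Qideal p R n c mb)⁻¹) :=
      avg_sqrt _ (fun 𝔟 => Vsum_nonneg p R hp0 δ n 𝔟)
    have hV : cinv * ∑ 𝔟 : ∀ i, (Fin n → M i) → Fin (nbins R n i),
        ∑ c : Fin n → C, ∑ mb : ∀ i, Fin (nbins R n i),
          (Ptil p R δ n 𝔟 c mb - Qideal p R n c mb) ^ 2 * (Qideal p R n c mb)⁻¹
        ≤ eps p δ n + A * σ ^ n := by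
      have e3 : ∑ 𝔟 : ∀ i, (Fin n → M i) → Fin (nbins R n i),
          ∑ c : Fin n → C, ∑ mb : ∀ i, Fin (nbins R n i),
            (Ptil p R δ n 𝔟 c mb - Qideal p R n c mb) ^ 2 * (Qideal p R n c mb)⁻¹
          = (∑ 𝔟 : ∀ i, (Fin n → M i) → Fin (nbins R n i),
              ∑ c : Fin n → C, ∑ mb : ∀ i, Fin (nbins R n i),
                (Ptil p R δ n 𝔟 c mb) ^ 2 * (Qideal p R n c mb)⁻¹)
            + (Fintype.card (∀ i, (Fin n → M i) → Fin (nbins R n i)) : ℝ) *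
                (1 - 2 * tau p δ n) := by
        rw [Finset.sum_congr rfl fun 𝔟 _ => V_eq p R hp0 hp1 δ n 𝔟]
        rw [Finset.sum_congr rfl (fun (𝔟 : ∀ i, (Fin n → M i) → Fin (nbins R n i))
          (_ : 𝔟 ∈ univ) => (by ring :
          ((∑ c : Fin n → C, ∑ mb : ∀ i, Fin (nbins R n i),
            (Ptil p R δ n 𝔟 c mb) ^ 2 * (Qideal p R n c mb)⁻¹)
            - 2 * tau p δ n + 1)
          = (∑ c : Fin n → C, ∑ mb : ∀ i, Fin (nbins R n i),
              (Ptil p R δ n 𝔟 c mb) ^ 2 * (Qideal p R n c mb)⁻¹)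
            + (1 - 2 * tau p δ n)))]
        rw [Finset.sum_add_distrib, Finset.sum_const, card_univ, nsmul_eq_mul]
      rw [e3, mul_add]
      rw [show cinv * ((Fintype.card (∀ i, (Fin n → M i) → Fin (nbins R n i)) : ℝ) *
          (1 - 2 * tau p δ n))
          = (cinv * (Fintype.card (∀ i, (Fin n → M i) → Fin (nbins R n i)) : ℝ)) *
            (1 - 2 * tau p δ n) from by ring, hc1, one_mul]
      have hD := Dsum_le p R hp0 δ n
      rw [← hcinv] at hD
      have hsplitS : ∑ S ∈ (univ : Finset (Fin t)).powerset,
          (∏ i ∈ S, ((nbins R n i : ℝ) - 1)) * BS p S δ n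
          = BS p ∅ δ n + ∑ S ∈ ((univ : Finset (Fin t)).powerset).erase ∅,
              (∏ i ∈ S, ((nbins R n i : ℝ) - 1)) * BS p S δ n := by
        rw [← Finset.add_sum_erase _ _ (by simp : (∅ : Finset (Fin t)) ∈
          (univ : Finset (Fin t)).powerset)]
        rw [Finset.prod_empty, one_mul]
      have htau := tau_add_eps p hp1 δ n
      have hBSe := BS_empty_le p hp0 δ n
      have hKn := hK n
      rw [hsplitS] at hD
      linarith
    have hVfinal : Real.sqrt (cinv * ∑ 𝔟 : ∀ i, (Fin n → M i) → Fin (nbins R n i),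
        ∑ c : Fin n → C, ∑ mb : ∀ i, Fin (nbins R n i),
          (Ptil p R δ n 𝔟 c mb - Qideal p R n c mb) ^ 2 * (Qideal p R n c mb)⁻¹)
        ≤ Real.sqrt (2 * (A * σ ^ n)) := by
      refine Real.sqrt_le_sqrt ?_
      have := hEps n
      linarith [hV]
    refine havg.trans ?_
    have := hjen.trans hVfinal
    have heps := hEps n
    linarith
  -- conclude with explicit exponent
  obtain ⟨β, hβdef⟩ : ∃ β : ℝ, β = - Real.logb 2 σ := ⟨_, rfl⟩
  have hβ0 : 0 < β := by
    rw [hβdef]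
    have := Real.logb_neg one_lt_two hσ0 hσ1
    linarith
  have hσn : ∀ n : ℕ, σ ^ n = (2:ℝ) ^ (-(β * (n:ℝ))) := by
    intro n
    have e1 : σ = (2:ℝ) ^ Real.logb 2 σ :=
      (Real.rpow_logb two_pos (by norm_num) hσ0).symm
    calc σ ^ n = ((2:ℝ) ^ Real.logb 2 σ) ^ n := by rw [← e1]
      _ = ((2:ℝ) ^ Real.logb 2 σ) ^ ((n : ℕ) : ℝ) := by
          rw [Real.rpow_natCast]
      _ = (2:ℝ) ^ (Real.logb 2 σ * (n:ℝ)) := by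
          rw [← Real.rpow_mul two_pos.le]
      _ = (2:ℝ) ^ (-(β * (n:ℝ))) := by
          rw [hβdef]
          ring_nf
  obtain ⟨D, hDdef⟩ : ∃ D : ℝ, D = 2⁻¹ * (A + Real.sqrt (2 * A)) := ⟨_, rfl⟩
  have hD0 : 0 < D := by
    rw [hDdef]
    have : (0:ℝ) ≤ Real.sqrt (2 * A) := Real.sqrt_nonneg _
    linarith
  refine ⟨β / 4, by linarith, ⌈Real.logb 2 D / (β / 4)⌉₊, fun n hn => ?_⟩
  have hDn : D ≤ (2:ℝ) ^ ((β / 4) * (n:ℝ)) := by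
    refine (Real.logb_le_iff_le_rpow one_lt_two hD0).mp ?_
    have h1 : Real.logb 2 D / (β / 4) ≤ (n:ℝ) := by
      refine le_trans (Nat.le_ceil _) ?_
      exact_mod_cast hn
    calc Real.logb 2 D = (Real.logb 2 D / (β / 4)) * (β / 4) := by
          field_simp
      _ ≤ (n:ℝ) * (β / 4) := by
          refine mul_le_mul_of_nonneg_right h1 (by linarith)
      _ = (β / 4) * (n:ℝ) := by ring
  have hstep : Ebin p R n ≤ D * (2:ℝ) ^ (-(β * (n:ℝ)) / 2) := by
    have h2 : (2:ℝ) ^ (-(β * (n:ℝ))) ≤ (2:ℝ) ^ (-(β * (n:ℝ)) / 2) := by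
      refine Real.rpow_le_rpow_of_exponent_le one_le_two ?_
      have : (0:ℝ) ≤ β * (n:ℝ) := mul_nonneg hβ0.le (Nat.cast_nonneg n)
      linarith
    have h3 : Real.sqrt (2 * (A * σ ^ n))
        = Real.sqrt (2 * A) * (2:ℝ) ^ (-(β * (n:ℝ)) / 2) := by
      rw [hσn n, ← mul_assoc, Real.sqrt_mul (by positivity)]
      congr 1
      rw [Real.sqrt_eq_rpow, ← Real.rpow_mul two_pos.le]
      congr 1
      ring
    calc Ebin p R n ≤ 2⁻¹ * (A * σ ^ n + Real.sqrt (2 * (A * σ ^ n))) := hmain n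
      _ = 2⁻¹ * (A * (2:ℝ) ^ (-(β * (n:ℝ)))
          + Real.sqrt (2 * A) * (2:ℝ) ^ (-(β * (n:ℝ)) / 2)) := by
          rw [h3, hσn n]
      _ ≤ 2⁻¹ * (A * (2:ℝ) ^ (-(β * (n:ℝ)) / 2)
          + Real.sqrt (2 * A) * (2:ℝ) ^ (-(β * (n:ℝ)) / 2)) := by
          have := mul_le_mul_of_nonneg_left h2 hA0.le
          linarith
      _ = D * (2:ℝ) ^ (-(β * (n:ℝ)) / 2) := by
          rw [hDdef]
          ring
  calc Ebin p R n ≤ D * (2:ℝ) ^ (-(β * (n:ℝ)) / 2) := hstep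
    _ ≤ (2:ℝ) ^ ((β / 4) * (n:ℝ)) * (2:ℝ) ^ (-(β * (n:ℝ)) / 2) :=
        mul_le_mul_of_nonneg_right hDn (Real.rpow_nonneg two_pos.le _)
    _ = (2:ℝ) ^ ((β / 4) * (n:ℝ) + -(β * (n:ℝ)) / 2) := by
        rw [← Real.rpow_add two_pos]
    _ = (2:ℝ) ^ (-(β / 4 * (n:ℝ))) := by
        congr 1
        ring

end OSRB
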